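/- arXiv:1611.02384 — 5 statements merged into one kernel-verified Lean document; each statement's English description precedes it below -/
import Mathlib

section
/- The strong maximum principle for the horizontal mean curvature operator fails in dimension m = 2: with F⃗ = (−x², x¹) on ℝ², u := x¹x² + (x²)², v := x¹x², and U := {(x¹,x²) ∈ ℝ² : x¹ > 0 and x¹ + x² > 0}, one has: ∇u + F⃗ = (0, 2x¹ + 2x²) ≠ 0 and ∇v + F⃗ = (0, 2x¹) ≠ 0 on U (so U is nonsingular for both u and v); H_F(u) = 0 and H_F(v) = 0 on U; u ≥ v on U with u = v at every point of {(x¹, 0) : x¹ > 0} ⊆ U; and yet u is not identically equal to v on U. -/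
open Set Finset

noncomputable section

/-- The `k`-th standard basis vector of `ℝ^N` (zero if `k ≥ N`). -/
def ee (N k : ℕ) : Fin N → ℝ := fun i => if (i : ℕ) = k then 1 else 0

/-- The `k`-th partial derivative. -/
def pd (N k : ℕ) (f : (Fin N → ℝ) → ℝ) (x : Fin N → ℝ) : ℝ := fderiv ℝ f x (ee N k)

/-- `∇u + F`. -/
def gradF (N : ℕ) (F : (Fin N → ℝ) → (Fin N → ℝ)) (u : (Fin N → ℝ) → ℝ)
    (x : Fin N → ℝ) : Fin N → ℝ :=
  fun i => pd N i u x + F x i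

/-- The Legendrian (horizontal) normal `N_F(u) = (∇u + F)/|∇u + F|`. -/
def legN (N : ℕ) (F : (Fin N → ℝ) → (Fin N → ℝ)) (u : (Fin N → ℝ) → ℝ)
    (x : Fin N → ℝ) : Fin N → ℝ :=
  fun i => gradF N F u x i / Real.sqrt (∑ k, (gradF N F u x k) ^ 2)

/-- The horizontal (p-)mean curvature `H_F(u) = div N_F(u)`. -/
def Hmc (N : ℕ) (F : (Fin N → ℝ) → (Fin N → ℝ)) (u : (Fin N → ℝ) → ℝ)
    (x : Fin N → ℝ) : ℝ :=
  ∑ i : Fin N, pd N (i : ℕ) (fun y => legN N F u y i) x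



abbrev P (i : Fin 2) : (Fin 2 → ℝ) →L[ℝ] ℝ :=
  ContinuousLinearMap.proj (R := ℝ) (φ := fun _ : Fin 2 => ℝ) i

lemma hasF_u (x : Fin 2 → ℝ) :
    HasFDerivAt (fun x : Fin 2 → ℝ => x 0 * x 1 + x 1 ^ 2)
      ((x 1) • P 0 + (x 0 + 2 * x 1) • P 1) x := by
  have h0 : HasFDerivAt (fun x : Fin 2 → ℝ => x 0) (P 0) x := hasFDerivAt_apply 0 x
  have h1 : HasFDerivAt (fun x : Fin 2 → ℝ => x 1) (P 1) x := hasFDerivAt_apply 1 x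
  have h := (h0.fun_mul h1).fun_add (h1.fun_mul h1)
  simp only [pow_two]
  refine h.congr_fderiv ?_
  ext y
  simp [ContinuousLinearMap.smulRight_apply]
  ring

lemma hasF_v (x : Fin 2 → ℝ) :
    HasFDerivAt (fun x : Fin 2 → ℝ => x 0 * x 1)
      ((x 1) • P 0 + (x 0) • P 1) x := by
  have h0 : HasFDerivAt (fun x : Fin 2 → ℝ => x 0) (P 0) x := hasFDerivAt_apply 0 x
  have h1 : HasFDerivAt (fun x : Fin 2 → ℝ => x 1) (P 1) x := hasFDerivAt_apply 1 x
  have h := h0.fun_mul h1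
  refine h.congr_fderiv ?_
  ext y
  simp [ContinuousLinearMap.smulRight_apply]
  ring

lemma pd_u (x : Fin 2 → ℝ) :
    pd 2 0 (fun x : Fin 2 → ℝ => x 0 * x 1 + x 1 ^ 2) x = x 1 ∧
    pd 2 1 (fun x : Fin 2 → ℝ => x 0 * x 1 + x 1 ^ 2) x = x 0 + 2 * x 1 := by
  rw [pd, pd, (hasF_u x).fderiv]
  constructor <;> simp [ee] <;> norm_num

lemma pd_v (x : Fin 2 → ℝ) :
    pd 2 0 (fun x : Fin 2 → ℝ => x 0 * x 1) x = x 1 ∧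
    pd 2 1 (fun x : Fin 2 → ℝ => x 0 * x 1) x = x 0 := by
  rw [pd, pd, (hasF_v x).fderiv]
  constructor <;> simp [ee] <;> norm_num




/-- failure of the strong maximum principle for the horizontal
mean curvature operator in dimension `m = 2`, witnessed by `u = x¹x² + (x²)²`,
`v = x¹x²`, `F = (−x², x¹)` on `U = {x¹ > 0, x¹ + x² > 0}`. -/
theorem smp_fails_in_dimension_two :
    let F : (Fin 2 → ℝ) → (Fin 2 → ℝ) := fun x => ![-(x 1), x 0]
    let u : (Fin 2 → ℝ) → ℝ := fun x => x 0 * x 1 + (x 1) ^ 2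
    let v : (Fin 2 → ℝ) → ℝ := fun x => x 0 * x 1
    let U : Set (Fin 2 → ℝ) := {x | 0 < x 0 ∧ 0 < x 0 + x 1}
    (∀ x ∈ U, gradF 2 F u x = ![0, 2 * x 0 + 2 * x 1] ∧ gradF 2 F u x ≠ 0) ∧
    (∀ x ∈ U, gradF 2 F v x = ![0, 2 * x 0] ∧ gradF 2 F v x ≠ 0) ∧
    (∀ x ∈ U, Hmc 2 F u x = 0) ∧
    (∀ x ∈ U, Hmc 2 F v x = 0) ∧
    (∀ x ∈ U, v x ≤ u x) ∧
    (∀ a : ℝ, 0 < a → (![a, 0] : Fin 2 → ℝ) ∈ U ∧ u ![a, 0] = v ![a, 0]) ∧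
    ¬ (∀ x ∈ U, u x = v x) := by
  intro F u v U
  -- gradient computations, valid everywhere
  have hgu : ∀ y : Fin 2 → ℝ, gradF 2 F u y = ![0, 2 * y 0 + 2 * y 1] := by
    intro y
    funext i
    fin_cases i <;>
      simp [gradF, F, u, (pd_u y).1, (pd_u y).2] <;> ring
  have hgv : ∀ y : Fin 2 → ℝ, gradF 2 F v y = ![0, 2 * y 0] := by
    intro y
    funext i
    fin_cases i <;>
      simp [gradF, F, v, (pd_v y).1, (pd_v y).2] <;> ring
  -- the Legendrian normals
  have hlu0 : ∀ y : Fin 2 → ℝ, legN 2 F u y 0 = 0 := by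
    intro y
    simp [legN, hgu y]
  have hlv0 : ∀ y : Fin 2 → ℝ, legN 2 F v y 0 = 0 := by
    intro y
    simp [legN, hgv y]
  have hlu1 : ∀ y : Fin 2 → ℝ, 0 < y 0 + y 1 → legN 2 F u y 1 = 1 := by
    intro y hy
    have h2 : (0:ℝ) < 2 * y 0 + 2 * y 1 := by linarith
    rw [legN, hgu y]
    rw [Fin.sum_univ_two]
    simp only [Matrix.cons_val_zero, Matrix.cons_val_one, Matrix.head_cons]
    rw [show (0:ℝ)^2 + (2 * y 0 + 2 * y 1)^2 = (2 * y 0 + 2 * y 1)^2 by ring,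
      Real.sqrt_sq h2.le]
    exact div_self h2.ne'
  have hlv1 : ∀ y : Fin 2 → ℝ, 0 < y 0 → legN 2 F v y 1 = 1 := by
    intro y hy
    have h2 : (0:ℝ) < 2 * y 0 := by linarith
    rw [legN, hgv y]
    rw [Fin.sum_univ_two]
    simp only [Matrix.cons_val_zero, Matrix.cons_val_one, Matrix.head_cons]
    rw [show (0:ℝ)^2 + (2 * y 0)^2 = (2 * y 0)^2 by ring, Real.sqrt_sq h2.le]
    exact div_self h2.ne'
  refine ⟨?_, ?_, ?_, ?_, ?_, ?_, ?_⟩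
  · intro x hx
    refine ⟨hgu x, ?_⟩
    rw [hgu x]
    intro h
    have := congrFun h 1
    simp at this
    rcases hx with ⟨h1, h2⟩
    linarith
  · intro x hx
    refine ⟨hgv x, ?_⟩
    rw [hgv x]
    intro h
    have := congrFun h 1
    simp at this
    rcases hx with ⟨h1, h2⟩
    linarith
  · -- Hmc u = 0
    intro x hx
    rw [Hmc, Fin.sum_univ_two]
    have e0 : (fun y => legN 2 F u y 0) = fun _ => (0:ℝ) := funext hlu0
    have h0 : pd 2 ((0 : Fin 2) : ℕ) (fun y => legN 2 F u y 0) x = 0 := by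
      rw [pd, e0, fderiv_fun_const]
      simp
    have hev : (fun y => legN 2 F u y 1) =ᶠ[nhds x] fun _ => (1:ℝ) := by
      have hopen : IsOpen {y : Fin 2 → ℝ | 0 < y 0 + y 1} :=
        isOpen_lt continuous_const ((continuous_apply 0).add (continuous_apply 1))
      filter_upwards [hopen.mem_nhds hx.2] with y hy
      exact hlu1 y hy
    have h1 : pd 2 ((1 : Fin 2) : ℕ) (fun y => legN 2 F u y 1) x = 0 := by
      rw [pd, hev.fderiv_eq, fderiv_fun_const]
      simp
    rw [h0, h1]; ring
  · -- Hmc v = 0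
    intro x hx
    rw [Hmc, Fin.sum_univ_two]
    have e0 : (fun y => legN 2 F v y 0) = fun _ => (0:ℝ) := funext hlv0
    have h0 : pd 2 ((0 : Fin 2) : ℕ) (fun y => legN 2 F v y 0) x = 0 := by
      rw [pd, e0, fderiv_fun_const]
      simp
    have hev : (fun y => legN 2 F v y 1) =ᶠ[nhds x] fun _ => (1:ℝ) := by
      have hopen : IsOpen {y : Fin 2 → ℝ | 0 < y 0} :=
        isOpen_lt continuous_const (continuous_apply 0)
      filter_upwards [hopen.mem_nhds hx.1] with y hy
      exact hlv1 y hy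
    have h1 : pd 2 ((1 : Fin 2) : ℕ) (fun y => legN 2 F v y 1) x = 0 := by
      rw [pd, hev.fderiv_eq, fderiv_fun_const]
      simp
    rw [h0, h1]; ring
  · intro x _
    simp only [u, v]
    nlinarith [sq_nonneg (x 1)]
  · intro a ha
    refine ⟨⟨by simpa using ha, by simpa using ha⟩, ?_⟩
    simp [u, v]
  · intro h
    have h1 : (![1, 1] : Fin 2 → ℝ) ∈ U := by
      constructor <;> norm_num
    have := h ![1, 1] h1
    simp [u, v] at this
end
end

section
/- Let Ω ⊆ ℝ^{m+1} be open, θ a C^∞ nowhere-vanishing 1-form on Ω, and ξ := ker θ, a rank-m distribution. Let Σ ⊂ Ω be a C^∞ hypersurface and p₀ ∈ Σ a point near which ξ ≠ TΣ, so that ξ ∩ TΣ is a rank-(m−1) distribution along Σ near p₀. Assume that the restriction of dθ to ξ × ξ, as a skew bilinear form on ξ, has rank ≥ 3 at every point near p₀. Then for every C^∞ local frame X₁,...,X_{m−1} of ξ ∩ TΣ near p₀, the rank of £(X₁,...,X_{m−1}) equals m at every point near p₀. -/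
open Set Finset

noncomputable section

/-- Derivative of `f` along the vector field `X`. -/
def vApp {N : ℕ} (X : (Fin N → ℝ) → (Fin N → ℝ)) (f : (Fin N → ℝ) → ℝ) (x : Fin N → ℝ) : ℝ :=
  fderiv ℝ f x (X x)

/-- Lie bracket of vector fields. -/
def lieBr {N : ℕ} (X Y : (Fin N → ℝ) → (Fin N → ℝ)) : (Fin N → ℝ) → (Fin N → ℝ) :=
  fun x => fderiv ℝ Y x (X x) - fderiv ℝ X x (Y x)

/-- `£(S)`: the smallest `C^∞`-module of vector fields containing `S`
and closed under Lie bracket. -/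
inductive LieSpan {N : ℕ} (Ω : Set (Fin N → ℝ)) (S : Set ((Fin N → ℝ) → (Fin N → ℝ))) :
    ((Fin N → ℝ) → (Fin N → ℝ)) → Prop
  | base : ∀ X ∈ S, LieSpan Ω S X
  | smul : ∀ (f : (Fin N → ℝ) → ℝ) (X : (Fin N → ℝ) → (Fin N → ℝ)),
      ContDiffOn ℝ (⊤ : ℕ∞) f Ω → LieSpan Ω S X → LieSpan Ω S (fun x => f x • X x)
  | add : ∀ X Y, LieSpan Ω S X → LieSpan Ω S Y → LieSpan Ω S (fun x => X x + Y x)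
  | bracket : ∀ X Y, LieSpan Ω S X → LieSpan Ω S Y → LieSpan Ω S (lieBr X Y)

/-- The exterior derivative of the 1-form `θ` at `x` evaluated on constant
vector fields: `dθ(v,w) = (∇_vθ)(w) − (∇_wθ)(v)`. -/
def dForm {N : ℕ} (θ : (Fin N → ℝ) → ((Fin N → ℝ) →L[ℝ] ℝ)) (x v w : Fin N → ℝ) : ℝ :=
  fderiv ℝ θ x v w - fderiv ℝ θ x w v

section Aux

open Module

variable {E : Type*} [NormedAddCommGroup E] [NormedSpace ℝ E]

/-- The skew pairing attached to a CLM-valued map, as a bilinear map. -/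
def skewPair (D : E →L[ℝ] E →L[ℝ] ℝ) : E →ₗ[ℝ] E →ₗ[ℝ] ℝ :=
  LinearMap.mk₂ ℝ (fun v w => D v w - D w v)
    (fun a b w => by simp; ring)
    (fun c a w => by simp; ring)
    (fun v a b => by simp; ring)
    (fun c v a => by simp; ring)

@[simp] lemma skewPair_apply (D : E →L[ℝ] E →L[ℝ] ℝ) (v w : E) :
    skewPair D v w = D v w - D w v := rfl

lemma aux_finrank_ker_functional [FiniteDimensional ℝ E] (f : E →ₗ[ℝ] ℝ) (hf : f ≠ 0) :
    finrank ℝ (LinearMap.ker f) + 1 = finrank ℝ E := by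
  have hsurj : LinearMap.range f = ⊤ := by
    have : ∃ v, f v ≠ 0 := by
      by_contra hc
      push_neg at hc
      exact hf (LinearMap.ext fun v => by simp [hc v])
    rcases this with ⟨v, hv⟩
    rw [LinearMap.range_eq_top]
    intro c
    exact ⟨(c / f v) • v, by simp [div_mul_cancel₀, hv]⟩
  have := LinearMap.finrank_range_add_finrank_ker f
  rw [hsurj] at this
  simpa [add_comm] using this

lemma aux_finrank_inf_ker_le [FiniteDimensional ℝ E] (p : Submodule ℝ E) (f : E →ₗ[ℝ] ℝ) :
    finrank ℝ p ≤ finrank ℝ (p ⊓ LinearMap.ker f : Submodule ℝ E) + 1 := by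
  have hk : finrank ℝ (LinearMap.ker (f.domRestrict p)) =
      finrank ℝ (p ⊓ LinearMap.ker f : Submodule ℝ E) := by
    rw [LinearMap.ker_domRestrict]
    have h1 : Submodule.comap p.subtype (LinearMap.ker f)
        = Submodule.comap p.subtype (p ⊓ LinearMap.ker f) := by
      ext v; simp [v.2]
    rw [h1]
    exact (Submodule.comapSubtypeEquivOfLe inf_le_left).finrank_eq
  have h2 := LinearMap.finrank_range_add_finrank_ker (f.domRestrict p)
  have h3 : finrank ℝ (LinearMap.range (f.domRestrict p)) ≤ 1 := by
    simpa using (LinearMap.range (f.domRestrict p)).finrank_le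
  omega

lemma aux_finrank_inf_ker_eq [FiniteDimensional ℝ E] (p : Submodule ℝ E) (f : E →ₗ[ℝ] ℝ)
    (h : ¬ p ≤ LinearMap.ker f) :
    finrank ℝ (p ⊓ LinearMap.ker f : Submodule ℝ E) + 1 = finrank ℝ p := by
  have hk : finrank ℝ (LinearMap.ker (f.domRestrict p)) =
      finrank ℝ (p ⊓ LinearMap.ker f : Submodule ℝ E) := by
    rw [LinearMap.ker_domRestrict]
    have h1 : Submodule.comap p.subtype (LinearMap.ker f)
        = Submodule.comap p.subtype (p ⊓ LinearMap.ker f) := by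
      ext v; simp [v.2]
    rw [h1]
    exact (Submodule.comapSubtypeEquivOfLe inf_le_left).finrank_eq
  have h2 := LinearMap.finrank_range_add_finrank_ker (f.domRestrict p)
  rcases SetLike.not_le_iff_exists.mp h with ⟨v, hvp, hvf⟩
  have hfr : LinearMap.range (f.domRestrict p) = ⊤ := by
    rw [LinearMap.range_eq_top]
    intro c
    refine ⟨(c / f v) • ⟨v, hvp⟩, ?_⟩
    have : f v ≠ 0 := by simpa [LinearMap.mem_ker] using hvf
    simp [LinearMap.domRestrict_apply, div_mul_cancel₀, this]
  rw [hfr] at h2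
  simp only [finrank_top, finrank_self] at h2
  omega

lemma aux_bilin_span {B : E →ₗ[ℝ] E →ₗ[ℝ] ℝ} {s t : Set E}
    (h : ∀ v ∈ s, ∀ w ∈ t, B v w = 0) :
    ∀ v ∈ Submodule.span ℝ s, ∀ w ∈ Submodule.span ℝ t, B v w = 0 := by
  intro v hv
  induction hv using Submodule.span_induction with
  | mem x hx =>
      intro w hw
      induction hw using Submodule.span_induction with
      | mem y hy => exact h x hx y hy
      | zero => simp
      | add y z _ _ hy hz => simp [hy, hz]
      | smul a y _ hy => simp [hy]
  | zero => simp
  | add x y _ _ hx hy => intro w hw; simp [hx w hw, hy w hw]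
  | smul a x _ hx => intro w hw; simp [hx w hw]

/-- If `θ(X) ≡ 0` on an open set, then the derivative of the pairing vanishes. -/
lemma aux_pairing_deriv {U : Set E} (hU : IsOpen U)
    (θ : E → (E →L[ℝ] ℝ)) (hθ : ContDiffOn ℝ (⊤ : ℕ∞) θ U)
    (X : E → E) (hX : ContDiffOn ℝ (⊤ : ℕ∞) X U)
    (h0 : ∀ y ∈ U, θ y (X y) = 0) {x : E} (hx : x ∈ U) (v : E) :
    fderiv ℝ θ x v (X x) + θ x (fderiv ℝ X x v) = 0 := by
  have hθd : HasFDerivAt θ (fderiv ℝ θ x) x :=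
    ((hθ.differentiableOn (by simp)).differentiableAt
      (hU.mem_nhds hx)).hasFDerivAt
  have hXd : HasFDerivAt X (fderiv ℝ X x) x :=
    ((hX.differentiableOn (by simp)).differentiableAt
      (hU.mem_nhds hx)).hasFDerivAt
  have H := hθd.clm_apply hXd
  have heq : (fun y => θ y (X y)) =ᶠ[nhds x] (fun _ => (0:ℝ)) :=
    Filter.eventually_of_mem (hU.mem_nhds hx) h0
  have hzero : fderiv ℝ (fun y => θ y (X y)) x = 0 := by
    rw [heq.fderiv_eq]; exact fderiv_const_apply 0
  have := H.fderiv
  rw [hzero] at this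
  have hv := congrFun (congrArg (fun (L : E →L[ℝ] ℝ) => (L : E → ℝ)) this.symm) v
  simpa [add_comm] using hv

/-- Cartan-type identity: for sections of `ker θ`,
`θ([X,Y]) = −dθ(X,Y)`. -/
lemma aux_cartan {U : Set E} (hU : IsOpen U)
    (θ : E → (E →L[ℝ] ℝ)) (hθ : ContDiffOn ℝ (⊤ : ℕ∞) θ U)
    (X Y : E → E) (hX : ContDiffOn ℝ (⊤ : ℕ∞) X U) (hY : ContDiffOn ℝ (⊤ : ℕ∞) Y U)
    (h0X : ∀ y ∈ U, θ y (X y) = 0) (h0Y : ∀ y ∈ U, θ y (Y y) = 0)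
    {x : E} (hx : x ∈ U) :
    θ x (fderiv ℝ Y x (X x) - fderiv ℝ X x (Y x))
      = -(fderiv ℝ θ x (X x) (Y x) - fderiv ℝ θ x (Y x) (X x)) := by
  have h1 := aux_pairing_deriv hU θ hθ X hX h0X hx (Y x)
  have h2 := aux_pairing_deriv hU θ hθ Y hY h0Y hx (X x)
  have := (θ x).map_sub (fderiv ℝ Y x (X x)) (fderiv ℝ X x (Y x))
  rw [this]
  linarith

/-- Brackets of fields tangent to the level sets of `g` stay tangent. -/
lemma aux_tangent_bracket {U : Set E} (hU : IsOpen U)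
    (g : E → ℝ) (hg : ContDiffOn ℝ (⊤ : ℕ∞) g U)
    (X Y : E → E) (hX : ContDiffOn ℝ (⊤ : ℕ∞) X U) (hY : ContDiffOn ℝ (⊤ : ℕ∞) Y U)
    (h0X : ∀ y ∈ U, fderiv ℝ g y (X y) = 0) (h0Y : ∀ y ∈ U, fderiv ℝ g y (Y y) = 0)
    {x : E} (hx : x ∈ U) :
    fderiv ℝ g x (fderiv ℝ Y x (X x) - fderiv ℝ X x (Y x)) = 0 := by
  have hdg : ContDiffOn ℝ (⊤ : ℕ∞) (fderiv ℝ g) U :=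
    hg.fderiv_of_isOpen hU (by exact_mod_cast le_top)
  have hsymm : ∀ v w, fderiv ℝ (fderiv ℝ g) x v w = fderiv ℝ (fderiv ℝ g) x w v := by
    apply second_derivative_symmetric_of_eventually (f := g) (f' := fderiv ℝ g)
    · filter_upwards [hU.mem_nhds hx] with y hy
      exact ((hg.differentiableOn (by simp)).differentiableAt
        (hU.mem_nhds hy)).hasFDerivAt
    · exact ((hdg.differentiableOn (by simp)).differentiableAt
        (hU.mem_nhds hx)).hasFDerivAt
  have h := aux_cartan hU (fderiv ℝ g) hdg X Y hX hY h0X h0Y hx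
  rw [h, hsymm (X x) (Y x)]
  ring

/-- The key linear-algebra step: if the radical of the skew form `B` on
`ker θx` has codimension at least 3, then `B` cannot vanish identically on the
hyperplane `ker θx ⊓ ker G`. -/
lemma aux_exists_pair [FiniteDimensional ℝ E] (θx G : E →L[ℝ] ℝ)
    (hθ : (θx : E →ₗ[ℝ] ℝ) ≠ 0) (hG : (G : E →ₗ[ℝ] ℝ) ≠ 0)
    (hne : LinearMap.ker (θx : E →ₗ[ℝ] ℝ) ≠ LinearMap.ker (G : E →ₗ[ℝ] ℝ))
    (B : E →ₗ[ℝ] E →ₗ[ℝ] ℝ)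
    (hrank : finrank ℝ (Submodule.span ℝ {v | θx v = 0 ∧ ∀ w, θx w = 0 → B v w = 0}) + 3 ≤
      finrank ℝ (LinearMap.ker (θx : E →ₗ[ℝ] ℝ))) :
    ∃ v w, v ∈ LinearMap.ker (θx : E →ₗ[ℝ] ℝ) ⊓ LinearMap.ker (G : E →ₗ[ℝ] ℝ) ∧
      w ∈ LinearMap.ker (θx : E →ₗ[ℝ] ℝ) ⊓ LinearMap.ker (G : E →ₗ[ℝ] ℝ) ∧ B v w ≠ 0 := by
  set ξ := LinearMap.ker (θx : E →ₗ[ℝ] ℝ) with hξ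
  set W := ξ ⊓ LinearMap.ker (G : E →ₗ[ℝ] ℝ) with hW
  by_contra hcon
  push_neg at hcon
  have hnle : ¬ ξ ≤ LinearMap.ker (G : E →ₗ[ℝ] ℝ) := by
    intro hle
    apply hne
    apply Submodule.eq_of_le_of_finrank_le hle
    have h1 := aux_finrank_ker_functional (θx : E →ₗ[ℝ] ℝ) hθ
    have h2 := aux_finrank_ker_functional (G : E →ₗ[ℝ] ℝ) hG
    rw [← hξ] at h1
    omega
  rcases SetLike.not_le_iff_exists.mp hnle with ⟨u, huξ, huG⟩
  have huG' : G u ≠ 0 := by simpa [LinearMap.mem_ker] using huG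
  set lam : E →ₗ[ℝ] ℝ := B.flip u with hlam
  set M := W ⊓ LinearMap.ker lam with hM
  have hMsub : M ≤ Submodule.span ℝ {v | θx v = 0 ∧ ∀ w, θx w = 0 → B v w = 0} := by
    intro v hv
    apply Submodule.subset_span
    obtain ⟨hvW, hvlam⟩ := hv
    refine ⟨?_, ?_⟩
    · have := hvW.1
      simpa [hξ, LinearMap.mem_ker] using this
    · intro w hw
      set c : ℝ := G w / G u with hc
      set w' : E := w - c • u with hw'
      have hw'W : w' ∈ W := by
        constructor
        · have h1 : θx w = 0 := hw
          have h2 : θx u = 0 := by simpa [hξ, LinearMap.mem_ker] using huξ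
          simp [hξ, hw', LinearMap.mem_ker, map_sub, map_smul, h1, h2]
        · have : G w' = 0 := by
            simp [hw', hc, div_mul_cancel₀ _ huG']
          simpa [LinearMap.mem_ker] using this
      have hdecomp : w = w' + c • u := by simp [hw']
      have hBvw' : B v w' = 0 := hcon v w' hvW hw'W
      have hBvu : B v u = 0 := by simpa [hlam, LinearMap.mem_ker] using hvlam
      rw [hdecomp]
      simp [map_add, map_smul, hBvw', hBvu]
  have h1 : finrank ℝ W ≤ finrank ℝ M + 1 := aux_finrank_inf_ker_le W lam
  have h2 : finrank ℝ W + 1 = finrank ℝ ξ := aux_finrank_inf_ker_eq ξ (G : E →ₗ[ℝ] ℝ) hnle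
  have h3 : finrank ℝ M ≤
      finrank ℝ (Submodule.span ℝ {v | θx v = 0 ∧ ∀ w, θx w = 0 → B v w = 0}) :=
    Submodule.finrank_mono hMsub
  omega

end Aux

/-- The Lie bracket of smooth vector fields is smooth. -/
lemma aux_lieBr_smooth {N : ℕ} {U : Set (Fin N → ℝ)} (hU : IsOpen U)
    {X Y : (Fin N → ℝ) → (Fin N → ℝ)}
    (hX : ContDiffOn ℝ (⊤ : ℕ∞) X U) (hY : ContDiffOn ℝ (⊤ : ℕ∞) Y U) :
    ContDiffOn ℝ (⊤ : ℕ∞) (lieBr X Y) U := by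
  have hdX : ContDiffOn ℝ (⊤ : ℕ∞) (fderiv ℝ X) U :=
    hX.fderiv_of_isOpen hU (by exact_mod_cast le_top)
  have hdY : ContDiffOn ℝ (⊤ : ℕ∞) (fderiv ℝ Y) U :=
    hY.fderiv_of_isOpen hU (by exact_mod_cast le_top)
  exact (hdY.clm_apply hX).sub (hdX.clm_apply hY)

/-- Proposition 4.1. Let `θ` be a smooth nowhere vanishing
1-form on `Ω ⊆ ℝ^{m+1}` with kernel distribution `ξ`, and `Σ = {g = 0}` a smooth
hypersurface through `p₀` with `ξ ≠ TΣ` near `p₀`. If `dθ|_{ξ×ξ}` has rank `≥ 3`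
at every point near `p₀`, then every smooth local frame `X₁,...,X_{m−1}` of
`ξ ∩ TΣ` near `p₀` satisfies `rank £(X₁,...,X_{m−1}) = m` at every point
near `p₀`. -/
theorem lie_span_rank_of_dtheta_rank_ge_three
    (m : ℕ)
    (Ω : Set (Fin (m + 1) → ℝ)) (hΩopen : IsOpen Ω)
    (θ : (Fin (m + 1) → ℝ) → ((Fin (m + 1) → ℝ) →L[ℝ] ℝ))
    (hθsmooth : ContDiffOn ℝ (⊤ : ℕ∞) θ Ω)
    (hθne : ∀ x ∈ Ω, θ x ≠ 0)
    -- the hypersurface `Σ = {g = 0}` through `p₀`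
    (g : (Fin (m + 1) → ℝ) → ℝ) (hg : ContDiffOn ℝ (⊤ : ℕ∞) g Ω)
    (p₀ : Fin (m + 1) → ℝ) (hp₀ : p₀ ∈ Ω) (hgp₀ : g p₀ = 0)
    -- a neighborhood of `p₀` on which everything is nondegenerate
    (V : Set (Fin (m + 1) → ℝ)) (hVopen : IsOpen V) (hpV : p₀ ∈ V) (hVΩ : V ⊆ Ω)
    (hdg : ∀ x ∈ V, fderiv ℝ g x ≠ 0)
    (hxine : ∀ x ∈ V,
      LinearMap.ker ((θ x) : (Fin (m + 1) → ℝ) →ₗ[ℝ] ℝ) ≠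
        LinearMap.ker ((fderiv ℝ g x) : (Fin (m + 1) → ℝ) →ₗ[ℝ] ℝ))
    -- `dθ|_{ξ×ξ}` has rank `≥ 3` at every point of `V`
    (hrank : ∀ x ∈ V,
      Module.finrank ℝ
          (Submodule.span ℝ
            {v : Fin (m + 1) → ℝ | θ x v = 0 ∧ ∀ w, θ x w = 0 → dForm θ x v w = 0}) + 3 ≤
        Module.finrank ℝ (LinearMap.ker ((θ x) : (Fin (m + 1) → ℝ) →ₗ[ℝ] ℝ))) :
    -- conclusion: every smooth frame of `ξ ∩ TΣ` on `V` has Lie span of rank `m`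
    ∀ X : Fin (m - 1) → ((Fin (m + 1) → ℝ) → (Fin (m + 1) → ℝ)),
      (∀ α, ContDiffOn ℝ (⊤ : ℕ∞) (X α) V) →
      (∀ x ∈ V, LinearIndependent ℝ (fun α => X α x)) →
      (∀ x ∈ V, Submodule.span ℝ (Set.range fun α => X α x) =
        LinearMap.ker ((θ x) : (Fin (m + 1) → ℝ) →ₗ[ℝ] ℝ) ⊓
          LinearMap.ker ((fderiv ℝ g x) : (Fin (m + 1) → ℝ) →ₗ[ℝ] ℝ)) →
      ∀ x ∈ V,
        Module.finrank ℝ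
          (Submodule.span ℝ {v | ∃ Z, LieSpan V (Set.range X) Z ∧ Z x = v}) = m := by
  intro X hXsm hXli hXspan x hx
  classical
  have hθV : ContDiffOn ℝ (⊤ : ℕ∞) θ V := hθsmooth.mono hVΩ
  have hgV : ContDiffOn ℝ (⊤ : ℕ∞) g V := hg.mono hVΩ
  -- coerced linear maps are nonzero
  have hθL : ∀ y ∈ V, ((θ y) : (Fin (m + 1) → ℝ) →ₗ[ℝ] ℝ) ≠ 0 := by
    intro y hy hc
    apply hθne y (hVΩ hy)
    ext v
    simpa using LinearMap.congr_fun hc v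
  have hdgL : ∀ y ∈ V, ((fderiv ℝ g y) : (Fin (m + 1) → ℝ) →ₗ[ℝ] ℝ) ≠ 0 := by
    intro y hy hc
    apply hdg y hy
    ext v
    simpa using LinearMap.congr_fun hc v
  have hEdim : Module.finrank ℝ (Fin (m + 1) → ℝ) = m + 1 := by
    simp [Module.finrank_pi]
  -- dimensions of the kernels
  have hker_dim : Module.finrank ℝ (LinearMap.ker ((θ x) : (Fin (m + 1) → ℝ) →ₗ[ℝ] ℝ)) = m := by
    have := aux_finrank_ker_functional ((θ x) : (Fin (m + 1) → ℝ) →ₗ[ℝ] ℝ) (hθL x hx)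
    omega
  have hkerg_dim : Module.finrank ℝ (LinearMap.ker ((fderiv ℝ g x) : (Fin (m + 1) → ℝ) →ₗ[ℝ] ℝ)) = m := by
    have := aux_finrank_ker_functional ((fderiv ℝ g x) : (Fin (m + 1) → ℝ) →ₗ[ℝ] ℝ) (hdgL x hx)
    omega
  have hm3 : 3 ≤ m := by
    have := hrank x hx
    omega
  -- fields of the frame are sections of `ker θ` and tangent to level sets of `g`
  have hXθ : ∀ α, ∀ y ∈ V, θ y (X α y) = 0 := by
    intro α y hy
    have hmem : X α y ∈ Submodule.span ℝ (Set.range fun β => X β y) :=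
      Submodule.subset_span ⟨α, rfl⟩
    rw [hXspan y hy] at hmem
    exact hmem.1
  have hXg : ∀ α, ∀ y ∈ V, fderiv ℝ g y (X α y) = 0 := by
    intro α y hy
    have hmem : X α y ∈ Submodule.span ℝ (Set.range fun β => X β y) :=
      Submodule.subset_span ⟨α, rfl⟩
    rw [hXspan y hy] at hmem
    exact hmem.2
  -- the key induction: everything in the Lie span is smooth and tangent to
  -- the level sets of `g`
  have key : ∀ Z, LieSpan V (Set.range X) Z →
      ContDiffOn ℝ (⊤ : ℕ∞) Z V ∧ ∀ y ∈ V, fderiv ℝ g y (Z y) = 0 := by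
    intro Z hZ
    induction hZ with
    | base W hW =>
        obtain ⟨α, rfl⟩ := hW
        exact ⟨hXsm α, hXg α⟩
    | smul f W hf _ ih =>
        refine ⟨hf.smul ih.1, fun y hy => ?_⟩
        rw [map_smul]
        simp [ih.2 y hy]
    | add W₁ W₂ _ _ ih1 ih2 =>
        refine ⟨ih1.1.add ih2.1, fun y hy => ?_⟩
        rw [map_add]
        simp [ih1.2 y hy, ih2.2 y hy]
    | bracket W₁ W₂ _ _ ih1 ih2 =>
        refine ⟨aux_lieBr_smooth hVopen ih1.1 ih2.1, fun y hy => ?_⟩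
        exact aux_tangent_bracket hVopen g hgV W₁ W₂ ih1.1 ih2.1 ih1.2 ih2.2 hy
  set S := Submodule.span ℝ {v | ∃ Z, LieSpan V (Set.range X) Z ∧ Z x = v} with hS
  -- upper bound: `S ≤ ker (dg x)`
  have hupper : S ≤ LinearMap.ker ((fderiv ℝ g x) : (Fin (m + 1) → ℝ) →ₗ[ℝ] ℝ) := by
    rw [hS, Submodule.span_le]
    rintro v ⟨Z, hZ, rfl⟩
    exact (key Z hZ).2 x hx
  have hSle : Module.finrank ℝ S ≤ m := by
    have := Submodule.finrank_mono hupper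
    omega
  -- the span of the frame at `x`
  set W0 := Submodule.span ℝ (Set.range fun α => X α x) with hW0
  have hW0S : W0 ≤ S := by
    rw [hW0, Submodule.span_le]
    rintro v ⟨α, rfl⟩
    exact Submodule.subset_span ⟨X α, LieSpan.base _ ⟨α, rfl⟩, rfl⟩
  have hW0dim : Module.finrank ℝ W0 = m - 1 := by
    have h := finrank_span_eq_card (hXli x hx)
    rw [hW0]
    rw [h]
    simp
  -- find a pair of frame fields whose bracket escapes `ker θ`
  have hpair : ∃ α β, dForm θ x (X α x) (X β x) ≠ 0 := by
    obtain ⟨v, w, hv, hw, hB⟩ := aux_exists_pair (θ x) (fderiv ℝ g x) (hθL x hx)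
      (hdgL x hx) (hxine x hx) (skewPair (fderiv ℝ θ x)) (by
        have h := hrank x hx
        have hset : {v : Fin (m + 1) → ℝ | θ x v = 0 ∧ ∀ w, θ x w = 0 →
            skewPair (fderiv ℝ θ x) v w = 0} =
            {v : Fin (m + 1) → ℝ | θ x v = 0 ∧ ∀ w, θ x w = 0 → dForm θ x v w = 0} := by
          ext v; simp [dForm]
        rw [hset]
        exact h)
    rw [← hXspan x hx] at hv hw
    by_contra hc
    push_neg at hc
    have hall : ∀ a ∈ Set.range (fun α => X α x), ∀ b ∈ Set.range (fun α => X α x),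
        skewPair (fderiv ℝ θ x) a b = 0 := by
      rintro a ⟨α, rfl⟩ b ⟨β, rfl⟩
      have := hc α β
      simpa [dForm] using this
    exact hB (aux_bilin_span hall v hv w hw)
  obtain ⟨α, β, hαβ⟩ := hpair
  -- the bracket escapes `ker θ`
  set z := lieBr (X α) (X β) x with hz
  have hzS : z ∈ S := Submodule.subset_span
    ⟨lieBr (X α) (X β), LieSpan.bracket _ _ (LieSpan.base _ ⟨α, rfl⟩) (LieSpan.base _ ⟨β, rfl⟩),
      rfl⟩
  have hzθ : θ x z ≠ 0 := by
    have hcar := aux_cartan hVopen θ hθV (X α) (X β) (hXsm α) (hXsm β)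
      (hXθ α) (hXθ β) hx
    have : θ x z = -(dForm θ x (X α x) (X β x)) := by
      rw [hz]; simpa [lieBr, dForm] using hcar
    rw [this]
    simpa using hαβ
  have hzW0 : z ∉ W0 := by
    intro hmem
    rw [hW0, hXspan x hx] at hmem
    exact hzθ hmem.1
  have hlt : W0 < S := lt_of_le_of_ne hW0S (by
    intro hEq
    exact hzW0 (hEq ▸ hzS))
  have hSge : m - 1 < Module.finrank ℝ S := by
    rw [← hW0dim]
    exact Submodule.finrank_lt_finrank_of_lt hlt
  omega
end
end

section
/- Let Ω ⊆ ℝ^{m+1} be open and 0 ≤ l ≤ m. Let θ¹,...,θ^l and ω¹,...,ω^{m+1−l} be C^∞ 1-forms and X₁,...,X_{m+1−l}, T₁,...,T_l C^∞ vector fields on Ω such that at every point {X₁,...,X_{m+1−l}, T₁,...,T_l} is a frame of ℝ^{m+1} dual to the coframe {ω¹,...,ω^{m+1−l}, θ¹,...,θ^l}. Define C^∞ functions W_{ij}^α by [X_i, X_j] = Σ_{α=1}^l W_{ij}^α T_α modulo the span of X₁,...,X_{m+1−l}. Suppose (m+1−l)(m−l)/2 ≥ l and that at every point the skew-symmetric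 (m+1−l)×(m+1−l) matrices (W_{ij}^α)_{i,j}, for α = 1,...,l, are linearly independent. Then the rank of £(X₁,...,X_{m+1−l}) equals m+1 at every point. Equivalently, this linear-independence condition holds if and only if the (m−l)-forms dθ^α ⌟ (ω¹ ∧ ... ∧ ω^{m+1−l}), α = 1,...,l, are linearly independent at every point. -/
open Set Finset

noncomputable section

/-- Insert `a`, `b` in front of the `(K−2)`-tuple `v`, producing a `K`-tuple. -/
def ins2 {N : ℕ} (K : ℕ) (a b : Fin N → ℝ) (v : Fin (K - 2) → (Fin N → ℝ)) :
    Fin K → (Fin N → ℝ) :=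
  fun t =>
    if h0 : (t : ℕ) = 0 then a
    else if h1 : (t : ℕ) = 1 then b
    else v ⟨(t : ℕ) - 2, by have := t.isLt; omega⟩

/-- The top exterior product `ω¹ ∧ ... ∧ ω^K` of the coframe `ω` evaluated at
`x` on a `K`-tuple of vectors, as a determinant. -/
def wedgeEval {N : ℕ} (K : ℕ) (ω : Fin K → ((Fin N → ℝ) → ((Fin N → ℝ) →L[ℝ] ℝ)))
    (x : Fin N → ℝ) (w : Fin K → (Fin N → ℝ)) : ℝ :=
  Matrix.det (Matrix.of fun i j => ω i x (w j))

/-- The interior product `dθ^α ⌟ (ω¹ ∧ ... ∧ ω^K)` at `x`, as a `(K−2)`-form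
(represented by its evaluation on tuples of vectors), contracted by means of the
frame `X` dual to `ω`. -/
def contrForm {N : ℕ} (K : ℕ) (ω : Fin K → ((Fin N → ℝ) → ((Fin N → ℝ) →L[ℝ] ℝ)))
    (X : Fin K → ((Fin N → ℝ) → (Fin N → ℝ)))
    (θα : (Fin N → ℝ) → ((Fin N → ℝ) →L[ℝ] ℝ)) (x : Fin N → ℝ)
    (v : Fin (K - 2) → (Fin N → ℝ)) : ℝ :=
  ∑ i : Fin K, ∑ j : Fin K,
    if (i : ℕ) < (j : ℕ) then
      dForm θα x (X i x) (X j x) * wedgeEval K ω x (ins2 K (X i x) (X j x) v)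
    else 0

/- ### Auxiliary lemmas -/

lemma aux_det_ne {K : ℕ} {σ : Fin K → Fin K} (hσ : Function.Injective σ) :
    (Matrix.of fun a b : Fin K => if a = σ b then (1:ℝ) else 0).det ≠ 0 := by
  have hb : Function.Bijective σ := Finite.injective_iff_bijective.1 hσ
  set π := Equiv.ofBijective σ hb with hπ
  have hM : (Matrix.of fun a b : Fin K => if a = σ b then (1:ℝ) else 0)
      = Matrix.transpose (Equiv.Perm.permMatrix ℝ π) := by
    ext a b
    have : σ b = π b := rfl
    simp [Equiv.Perm.permMatrix, PEquiv.toMatrix, Matrix.transpose_apply,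
      Equiv.toPEquiv, this, eq_comm]
  rw [hM, Matrix.det_transpose, Matrix.det_permutation]
  rcases Int.units_eq_one_or (Equiv.Perm.sign π) with h | h <;> rw [h] <;> norm_num

lemma aux_det_zero {K : ℕ} {σ : Fin K → Fin K} (hσ : ¬ Function.Injective σ) :
    (Matrix.of fun a b : Fin K => if a = σ b then (1:ℝ) else 0).det = 0 := by
  simp only [Function.Injective, not_forall] at hσ
  obtain ⟨b1, b2, h, hne⟩ := hσ
  exact Matrix.det_zero_of_column_eq hne (by intro a; simp [h])

lemma aux_fderiv_pairing {N : ℕ} {Ω : Set (Fin N → ℝ)} (hΩ : IsOpen Ω)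
    {x : Fin N → ℝ} (hx : x ∈ Ω)
    {θ : (Fin N → ℝ) → ((Fin N → ℝ) →L[ℝ] ℝ)} {Y : (Fin N → ℝ) → (Fin N → ℝ)}
    (hθ : ContDiffOn ℝ (⊤ : ℕ∞) θ Ω) (hY : ContDiffOn ℝ (⊤ : ℕ∞) Y Ω)
    (h0 : ∀ y ∈ Ω, θ y (Y y) = 0) (u : Fin N → ℝ) :
    fderiv ℝ θ x u (Y x) = - θ x (fderiv ℝ Y x u) := by
  have hθd : DifferentiableAt ℝ θ x :=
    (hθ.differentiableOn (by simp)).differentiableAt (hΩ.mem_nhds hx)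
  have hYd : DifferentiableAt ℝ Y x :=
    (hY.differentiableOn (by simp)).differentiableAt (hΩ.mem_nhds hx)
  have hg : HasFDerivAt (fun y => θ y (Y y))
      ((θ x).comp (fderiv ℝ Y x) + (fderiv ℝ θ x).flip (Y x)) x :=
    hθd.hasFDerivAt.clm_apply hYd.hasFDerivAt
  have he : (fun y => θ y (Y y)) =ᶠ[nhds x] (fun _ => (0:ℝ)) :=
    Filter.eventuallyEq_of_mem (hΩ.mem_nhds hx) h0
  have hzero : ((θ x).comp (fderiv ℝ Y x) + (fderiv ℝ θ x).flip (Y x)) = 0 := by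
    rw [← hg.fderiv, he.fderiv_eq, fderiv_fun_const]
    rfl
  have := congrFun (congrArg (fun (L : (Fin N → ℝ) →L[ℝ] ℝ) => (L : (Fin N → ℝ) → ℝ)) hzero) u
  simp only [ContinuousLinearMap.add_apply, ContinuousLinearMap.comp_apply,
    ContinuousLinearMap.flip_apply, ContinuousLinearMap.zero_apply] at this
  linarith

/-- Proposition 4.2. Given a smooth frame
`{X₁,...,X_{m+1−l}, T₁,...,T_l}` of `ℝ^{m+1}` on `Ω` dual to the coframe
`{ω¹,...,ω^{m+1−l}, θ¹,...,θ^l}`, with `[X_i,X_j] = Σ_α W_{ij}^α T_α mod (X)`,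
if `(m+1−l)(m−l)/2 ≥ l` and the matrices `(W_{ij}^α)`, `α = 1,...,l`, are
linearly independent at every point, then `£(X₁,...,X_{m+1−l})` has full rank
`m+1` everywhere; moreover at every point the matrices are linearly independent
iff the contracted forms `dθ^α ⌟ (ω¹ ∧ ... ∧ ω^{m+1−l})` are. -/
theorem lie_span_full_rank_of_independent_torsion
    (m l : ℕ) (hl : l ≤ m)
    (Ω : Set (Fin (m + 1) → ℝ)) (hΩopen : IsOpen Ω)
    (ω : Fin (m + 1 - l) → ((Fin (m + 1) → ℝ) → ((Fin (m + 1) → ℝ) →L[ℝ] ℝ)))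
    (θ : Fin l → ((Fin (m + 1) → ℝ) → ((Fin (m + 1) → ℝ) →L[ℝ] ℝ)))
    (X : Fin (m + 1 - l) → ((Fin (m + 1) → ℝ) → (Fin (m + 1) → ℝ)))
    (T : Fin l → ((Fin (m + 1) → ℝ) → (Fin (m + 1) → ℝ)))
    (hω : ∀ i, ContDiffOn ℝ (⊤ : ℕ∞) (ω i) Ω)
    (hθ : ∀ α, ContDiffOn ℝ (⊤ : ℕ∞) (θ α) Ω)
    (hX : ∀ i, ContDiffOn ℝ (⊤ : ℕ∞) (X i) Ω)
    (hT : ∀ α, ContDiffOn ℝ (⊤ : ℕ∞) (T α) Ω)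
    -- duality of the frame and the coframe
    (hdual₁ : ∀ x ∈ Ω, ∀ i j, ω i x (X j x) = if i = j then 1 else 0)
    (hdual₂ : ∀ x ∈ Ω, ∀ i β, ω i x (T β x) = 0)
    (hdual₃ : ∀ x ∈ Ω, ∀ α j, θ α x (X j x) = 0)
    (hdual₄ : ∀ x ∈ Ω, ∀ α β, θ α x (T β x) = if α = β then 1 else 0)
    -- `{X, T}` is a frame of `ℝ^{m+1}` at every point
    (hframe : ∀ x ∈ Ω, Submodule.span ℝ
      (Set.range (Sum.elim (fun i => X i x) (fun β => T β x))) = ⊤)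
    -- the structure functions `W_{ij}^α`
    (W : Fin (m + 1 - l) → Fin (m + 1 - l) → Fin l → (Fin (m + 1) → ℝ) → ℝ)
    (hWsmooth : ∀ i j α, ContDiffOn ℝ (⊤ : ℕ∞) (W i j α) Ω)
    (hW : ∀ x ∈ Ω, ∀ i j,
      lieBr (X i) (X j) x - (∑ α, W i j α x • T α x) ∈
        Submodule.span ℝ (Set.range fun k => X k x))
    -- the dimension count `(m+1−l)(m−l)/2 ≥ l`
    (hineq : l ≤ (m + 1 - l) * (m - l) / 2) :
    -- full rank of the Lie span, under pointwise linear independence of the `W^α`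
    ((∀ x ∈ Ω, LinearIndependent ℝ
        (fun α : Fin l => Matrix.of fun i j => W i j α x)) →
      ∀ x ∈ Ω,
        Submodule.span ℝ {v | ∃ Z, LieSpan Ω (Set.range X) Z ∧ Z x = v} = ⊤) ∧
    -- equivalence of the two linear-independence conditions, at every point
    (∀ x ∈ Ω,
      (LinearIndependent ℝ (fun α : Fin l => Matrix.of fun i j => W i j α x) ↔
       LinearIndependent ℝ (fun α : Fin l => contrForm (m + 1 - l) ω X (θ α) x))) := by
  -- θ vanishes on the span of the X's
  have θspan : ∀ x ∈ Ω, ∀ α, ∀ v ∈ Submodule.span ℝ (Set.range fun k => X k x),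
      θ α x v = 0 := by
    intro x hx α v hv
    have hle : Submodule.span ℝ (Set.range fun k => X k x)
        ≤ LinearMap.ker ((θ α x) : (Fin (m+1) → ℝ) →ₗ[ℝ] ℝ) := by
      rw [Submodule.span_le]
      rintro v ⟨k, rfl⟩
      simpa [LinearMap.mem_ker] using hdual₃ x hx α k
    simpa [LinearMap.mem_ker] using hle hv
  have θsum : ∀ x ∈ Ω, ∀ α (c : Fin l → ℝ), θ α x (∑ β, c β • T β x) = c α := by
    intro x hx α c
    rw [map_sum]
    simp [hdual₄ x hx, mul_ite]
  have θlie : ∀ x ∈ Ω, ∀ i j α, θ α x (lieBr (X i) (X j) x) = W i j α x := by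
    intro x hx i j α
    have h0 := θspan x hx α _ (hW x hx i j)
    rw [map_sub] at h0
    have h1 := θsum x hx α (fun β => W i j β x)
    linarith
  have Wskew : ∀ x ∈ Ω, ∀ i j α, W j i α x = -(W i j α x) := by
    intro x hx i j α
    have h1 := θlie x hx i j α
    have h2 := θlie x hx j i α
    have h3 : lieBr (X j) (X i) x = - lieBr (X i) (X j) x := by
      simp [lieBr, neg_sub]
    rw [h3, map_neg] at h2
    linarith
  have Wdiag : ∀ x ∈ Ω, ∀ i α, W i i α x = 0 := by
    intro x hx i α
    have h1 := θlie x hx i i α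
    have h3 : lieBr (X i) (X i) x = 0 := by simp [lieBr]
    rw [h3, map_zero] at h1
    linarith
  have dW : ∀ x ∈ Ω, ∀ i j α,
      dForm (θ α) x (X i x) (X j x) = -(W i j α x) := by
    intro x hx i j α
    have h1 := aux_fderiv_pairing hΩopen hx (hθ α) (hX j)
      (fun y hy => hdual₃ y hy α j) (X i x)
    have h2 := aux_fderiv_pairing hΩopen hx (hθ α) (hX i)
      (fun y hy => hdual₃ y hy α i) (X j x)
    have h3 : θ α x (fderiv ℝ (X j) x (X i x)) - θ α x (fderiv ℝ (X i) x (X j x))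
        = W i j α x := by
      have h4 := θlie x hx i j α
      have h5 : lieBr (X i) (X j) x = fderiv ℝ (X j) x (X i x) - fderiv ℝ (X i) x (X j x) := rfl
      rw [h5, map_sub] at h4
      linarith
    unfold dForm
    rw [h1, h2]
    linarith
  have contr_formula : ∀ x ∈ Ω, ∀ α v,
      contrForm (m + 1 - l) ω X (θ α) x v = ∑ i : Fin (m+1-l), ∑ j : Fin (m+1-l),
        if (i : ℕ) < (j : ℕ) then
          -(W i j α x) * wedgeEval (m + 1 - l) ω x (ins2 (m + 1 - l) (X i x) (X j x) v)
        else 0 := by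
    intro x hx α v
    unfold contrForm
    refine Finset.sum_congr rfl fun i _ => Finset.sum_congr rfl fun j _ => ?_
    by_cases h : (i : ℕ) < (j : ℕ)
    · rw [if_pos h, if_pos h, dW x hx i j α]
    · rw [if_neg h, if_neg h]
  constructor
  · -- Part A: full rank
    intro hLI x hx
    rw [eq_top_iff]
    set P := Submodule.span ℝ {v | ∃ Z, LieSpan Ω (Set.range X) Z ∧ Z x = v} with hP
    have hXP : ∀ k, X k x ∈ P := fun k =>
      Submodule.subset_span ⟨X k, LieSpan.base _ ⟨k, rfl⟩, rfl⟩
    have hspanX : Submodule.span ℝ (Set.range fun k => X k x) ≤ P := by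
      rw [Submodule.span_le]
      rintro v ⟨k, rfl⟩
      exact hXP k
    have hbr : ∀ i j, lieBr (X i) (X j) x ∈ P := fun i j =>
      Submodule.subset_span ⟨_, LieSpan.bracket _ _ (LieSpan.base _ ⟨i, rfl⟩)
        (LieSpan.base _ ⟨j, rfl⟩), rfl⟩
    have hu : ∀ i j, (∑ α, W i j α x • T α x) ∈ P := by
      intro i j
      have h1 := hspanX (hW x hx i j)
      have h2 := P.sub_mem (hbr i j) h1
      simpa using h2
    set L : (Fin l → ℝ) →ₗ[ℝ] (Fin (m+1) → ℝ) :=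
      { toFun := fun c => ∑ α, c α • T α x
        map_add' := by intro a b; simp [add_smul, Finset.sum_add_distrib]
        map_smul' := by intro r a; simp [mul_smul, Finset.smul_sum] } with hL
    set S := Submodule.span ℝ (Set.range fun p : Fin (m+1-l) × Fin (m+1-l) =>
      (fun α => W p.1 p.2 α x : Fin l → ℝ)) with hSdef
    have hS : S = ⊤ := by
      by_contra hne
      obtain ⟨f, hf0, hfbot⟩ :=
        Submodule.exists_dual_map_eq_bot_of_lt_top (lt_top_iff_ne_top.2 hne) inferInstance
      have hfw : ∀ p : Fin (m+1-l) × Fin (m+1-l), f (fun α => W p.1 p.2 α x) = 0 := by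
        intro p
        have hmem : f (fun α => W p.1 p.2 α x) ∈ Submodule.map f S :=
          ⟨_, Submodule.subset_span ⟨p, rfl⟩, rfl⟩
        rw [hfbot] at hmem
        simpa using hmem
      have hli := hLI x hx
      rw [Fintype.linearIndependent_iff] at hli
      have hc : ∀ α, f (fun β => if α = β then (1:ℝ) else 0) = 0 := by
        apply hli (fun α => f fun β => if α = β then 1 else 0)
        ext i j
        have h1 := hfw (i, j)
        rw [LinearMap.pi_apply_eq_sum_univ f] at h1
        simpa [Matrix.sum_apply, mul_comm] using h1
      apply hf0
      apply LinearMap.ext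
      intro y
      rw [LinearMap.pi_apply_eq_sum_univ f y]
      simp [hc]
    have hTP : ∀ β, T β x ∈ P := by
      intro β
      have h1 : T β x = L (fun α => if β = α then (1:ℝ) else 0) := by
        simp [hL]
      rw [h1]
      have h2 : (fun α => if β = α then (1:ℝ) else 0) ∈ S := by rw [hS]; trivial
      have h3 : L (fun α => if β = α then (1:ℝ) else 0) ∈ Submodule.map L S :=
        ⟨_, h2, rfl⟩
      rw [hSdef, Submodule.map_span] at h3
      refine Submodule.span_le.2 ?_ h3
      rintro v ⟨-, ⟨p, rfl⟩, rfl⟩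
      simpa [hL] using hu p.1 p.2
    rw [← hframe x hx, Submodule.span_le]
    rintro v ⟨k, rfl⟩
    cases k with
    | inl i => exact hXP i
    | inr β => exact hTP β
  · -- Part B: equivalence of linear independence
    intro x hx
    have key : ∀ i j : Fin (m + 1 - l), (i : ℕ) < (j : ℕ) →
        ∃ (v : Fin (m + 1 - l - 2) → (Fin (m + 1) → ℝ)) (s : ℝ), s ≠ 0 ∧
          ∀ i' j' : Fin (m + 1 - l), (i' : ℕ) < (j' : ℕ) →
            wedgeEval (m + 1 - l) ω x (ins2 (m + 1 - l) (X i' x) (X j' x) v) =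
              if i' = i ∧ j' = j then s else 0 := by
      intro i j hij
      have hK2 : 2 ≤ m + 1 - l := by have := j.isLt; omega
      have hijne : i ≠ j := fun h => absurd hij (by rw [h]; exact lt_irrefl _)
      have hcard : ({i, j}ᶜ : Finset (Fin (m + 1 - l))).card = m + 1 - l - 2 := by
        rw [Finset.card_compl, Finset.card_pair hijne, Fintype.card_fin]
      set E := Finset.orderIsoOfFin _ hcard with hE
      set e : Fin (m + 1 - l - 2) → Fin (m + 1 - l) :=
        fun t => (E t : Fin (m + 1 - l)) with he
      have he_mem : ∀ t, e t ≠ i ∧ e t ≠ j := by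
        intro t
        have h1 := (E t).2
        simp only [Finset.mem_compl, Finset.mem_insert, Finset.mem_singleton] at h1
        push_neg at h1
        exact h1
      have he_inj : Function.Injective e := fun a b h => E.injective (Subtype.ext h)
      have he_surj : ∀ y, y ≠ i → y ≠ j → ∃ t, e t = y := by
        intro y h1 h2
        refine ⟨E.symm ⟨y, ?_⟩, ?_⟩
        · simp [Finset.mem_compl, Finset.mem_insert, h1, h2]
        · simp [he]
      set σf : Fin (m + 1 - l) → Fin (m + 1 - l) → Fin (m + 1 - l) → Fin (m + 1 - l) :=
        fun i' j' b =>
          if _ : (b : ℕ) = 0 then i'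
          else if _ : (b : ℕ) = 1 then j'
          else e ⟨(b : ℕ) - 2, by have := b.isLt; omega⟩ with hσf
      have hσ0 : ∀ i' j' (b : Fin (m + 1 - l)), (b : ℕ) = 0 → σf i' j' b = i' := by
        intro i' j' b h
        simp [hσf, h]
      have hσ1 : ∀ i' j' (b : Fin (m + 1 - l)), (b : ℕ) = 1 → σf i' j' b = j' := by
        intro i' j' b h
        simp [hσf, h]
      have hσ2 : ∀ i' j' (b : Fin (m + 1 - l)), 2 ≤ (b : ℕ) →
          ∀ (h : (b : ℕ) - 2 < m + 1 - l - 2), σf i' j' b = e ⟨(b : ℕ) - 2, h⟩ := by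
        intro i' j' b hb h
        simp only [hσf]
        rw [dif_neg (by omega), dif_neg (by omega)]
      have hins : ∀ (i' j' : Fin (m + 1 - l)) b,
          ins2 (m + 1 - l) (X i' x) (X j' x) (fun t => X (e t) x) b = X (σf i' j' b) x := by
        intro i' j' b
        unfold ins2
        simp only [hσf]
        split_ifs <;> rfl
      have hwedge : ∀ i' j',
          wedgeEval (m + 1 - l) ω x
              (ins2 (m + 1 - l) (X i' x) (X j' x) (fun t => X (e t) x)) =
            (Matrix.of fun a b => if a = σf i' j' b then (1:ℝ) else 0).det := by
        intro i' j'
        unfold wedgeEval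
        congr 1
        ext a b
        simp only [Matrix.of_apply]
        rw [hins, hdual₁ x hx]
      refine ⟨fun t => X (e t) x,
        (Matrix.of fun a b => if a = σf i j b then (1:ℝ) else 0).det, ?_, ?_⟩
      · apply aux_det_ne
        rw [Finite.injective_iff_surjective]
        intro y
        by_cases hy1 : y = i
        · exact ⟨⟨0, by omega⟩, by rw [hσ0 i j _ rfl, hy1]⟩
        by_cases hy2 : y = j
        · exact ⟨⟨1, by omega⟩, by rw [hσ1 i j _ rfl, hy2]⟩
        obtain ⟨t, ht⟩ := he_surj y hy1 hy2
        refine ⟨⟨(t : ℕ) + 2, by have := t.isLt; omega⟩, ?_⟩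
        rw [hσ2 i j _ (by simp) (by simp [t.isLt])]
        rw [show (⟨((⟨(t : ℕ) + 2, by have := t.isLt; omega⟩ : Fin (m + 1 - l)) : ℕ) - 2,
          by simp [t.isLt]⟩ : Fin (m + 1 - l - 2)) = t from Fin.ext (by simp)]
        exact ht
      · intro i' j' hij'
        rw [hwedge]
        by_cases hcase : i' = i ∧ j' = j
        · rw [if_pos hcase, hcase.1, hcase.2]
        · rw [if_neg hcase]
          apply aux_det_zero
          have hout : (i' ≠ i ∧ i' ≠ j) ∨ (j' ≠ i ∧ j' ≠ j) := by
            by_contra hcon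
            push_neg at hcon
            obtain ⟨h1, h2⟩ := hcon
            by_cases hii : i' = i
            · by_cases hjj : j' = j
              · exact hcase ⟨hii, hjj⟩
              · have hji : j' = i := by
                  by_contra hh
                  exact hjj (h2 hh)
                have v1 := congrArg Fin.val hii
                have v2 := congrArg Fin.val hji
                omega
            · have hij2 := h1 hii
              have v1 := congrArg Fin.val hij2
              have hj'i : j' ≠ i := by
                intro hh
                have v2 := congrArg Fin.val hh
                omega
              have v2 := congrArg Fin.val (h2 hj'i)
              omega
          rcases hout with ⟨h1, h2⟩ | ⟨h1, h2⟩
          · obtain ⟨t, ht⟩ := he_surj i' h1 h2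
            intro hinj
            have hb0 : σf i' j' ⟨0, by omega⟩ = i' := hσ0 i' j' _ rfl
            have hb2 : σf i' j' ⟨(t : ℕ) + 2, by have := t.isLt; omega⟩ = i' := by
              rw [hσ2 i' j' _ (by simp) (by simp [t.isLt])]
              rw [show (⟨((⟨(t : ℕ) + 2, by have := t.isLt; omega⟩ : Fin (m + 1 - l)) : ℕ) - 2,
                by simp [t.isLt]⟩ : Fin (m + 1 - l - 2)) = t from Fin.ext (by simp)]
              exact ht
            have := congrArg Fin.val (hinj (hb0.trans hb2.symm))
            simp at this
          · obtain ⟨t, ht⟩ := he_surj j' h1 h2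
            intro hinj
            have hb0 : σf i' j' ⟨1, by omega⟩ = j' := hσ1 i' j' _ rfl
            have hb2 : σf i' j' ⟨(t : ℕ) + 2, by have := t.isLt; omega⟩ = j' := by
              rw [hσ2 i' j' _ (by simp) (by simp [t.isLt])]
              rw [show (⟨((⟨(t : ℕ) + 2, by have := t.isLt; omega⟩ : Fin (m + 1 - l)) : ℕ) - 2,
                by simp [t.isLt]⟩ : Fin (m + 1 - l - 2)) = t from Fin.ext (by simp)]
              exact ht
            have := congrArg Fin.val (hinj (hb0.trans hb2.symm))
            simp at this
    have keyC : ∀ i j : Fin (m + 1 - l), (i : ℕ) < (j : ℕ) →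
        ∃ (v : Fin (m + 1 - l - 2) → (Fin (m + 1) → ℝ)) (s : ℝ), s ≠ 0 ∧
          ∀ α, contrForm (m + 1 - l) ω X (θ α) x v = -(W i j α x) * s := by
      intro i j hij
      obtain ⟨v, s, hs, hval⟩ := key i j hij
      refine ⟨v, s, hs, fun α => ?_⟩
      rw [contr_formula x hx α v]
      have hterm : ∀ i' j' : Fin (m + 1 - l),
          (if (i' : ℕ) < (j' : ℕ) then
            -(W i' j' α x) * wedgeEval (m + 1 - l) ω x (ins2 (m + 1 - l) (X i' x) (X j' x) v)
          else 0) = if i' = i ∧ j' = j then -(W i j α x) * s else 0 := by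
        intro i' j'
        by_cases h : (i' : ℕ) < (j' : ℕ)
        · rw [if_pos h, hval i' j' h]
          by_cases h2 : i' = i ∧ j' = j
          · rw [if_pos h2, if_pos h2, h2.1, h2.2]
          · rw [if_neg h2, if_neg h2, mul_zero]
        · rw [if_neg h, if_neg]
          rintro ⟨rfl, rfl⟩
          exact h hij
      simp_rw [hterm]
      simp [Finset.sum_ite_eq, ite_and]
    constructor
    · -- W independent → contracted forms independent
      intro hWli
      rw [Fintype.linearIndependent_iff] at hWli ⊢
      intro c hc α
      have hcW : ∀ i j : Fin (m + 1 - l), (i : ℕ) < (j : ℕ) →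
          ∑ β, c β * W i j β x = 0 := by
        intro i j hij
        obtain ⟨v, s, hs, hval⟩ := keyC i j hij
        have h1 := congrFun hc v
        simp only [Finset.sum_apply, Pi.smul_apply, smul_eq_mul, Pi.zero_apply] at h1
        simp_rw [hval] at h1
        have h2 : (∑ β, c β * W i j β x) * (-s) = 0 := by
          rw [Finset.sum_mul, ← h1]
          exact Finset.sum_congr rfl fun β _ => by ring
        rcases mul_eq_zero.1 h2 with h3 | h3
        · exact h3
        · exact absurd (neg_eq_zero.1 h3) hs
      apply hWli c _ α
      ext i j
      simp only [Matrix.sum_apply, Matrix.smul_apply, Matrix.of_apply, smul_eq_mul,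
        Matrix.zero_apply]
      rcases lt_trichotomy (i : ℕ) (j : ℕ) with h | h | h
      · exact hcW i j h
      · have : i = j := Fin.ext h
        subst this
        simp [Wdiag x hx]
      · have hski : ∀ β, W i j β x = -(W j i β x) := fun β => Wskew x hx j i β
        simp_rw [hski, mul_neg, Finset.sum_neg_distrib]
        rw [hcW j i h, neg_zero]
    · -- contracted forms independent → W independent
      intro hCli
      rw [Fintype.linearIndependent_iff] at hCli ⊢
      intro c hc α
      have hW0 : ∀ i j : Fin (m + 1 - l), ∑ β, c β * W i j β x = 0 := by
        intro i j
        have h1 := congrFun (congrFun hc i) j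
        simpa [Matrix.sum_apply, smul_eq_mul] using h1
      apply hCli c _ α
      funext v
      simp only [Finset.sum_apply, Pi.smul_apply, smul_eq_mul, Pi.zero_apply]
      have swap : ∑ β, c β * contrForm (m + 1 - l) ω X (θ β) x v =
          ∑ i : Fin (m + 1 - l), ∑ j : Fin (m + 1 - l),
            if (i : ℕ) < (j : ℕ) then
              (∑ β, c β * -(W i j β x)) *
                wedgeEval (m + 1 - l) ω x (ins2 (m + 1 - l) (X i x) (X j x) v)
            else 0 := by
        simp_rw [contr_formula x hx, Finset.mul_sum, mul_ite, mul_zero]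
        rw [Finset.sum_comm]
        refine Finset.sum_congr rfl fun i _ => ?_
        rw [Finset.sum_comm]
        refine Finset.sum_congr rfl fun j _ => ?_
        by_cases h : (i : ℕ) < (j : ℕ)
        · simp only [if_pos h, Finset.sum_mul]
          exact Finset.sum_congr rfl fun β _ => by ring
        · simp [h]
      rw [swap]
      refine Finset.sum_eq_zero fun i _ => Finset.sum_eq_zero fun j _ => ?_
      by_cases h : (i : ℕ) < (j : ℕ)
      · rw [if_pos h]
        have : (∑ β, c β * -(W i j β x)) = -∑ β, c β * W i j β x := by
          simp [mul_neg, Finset.sum_neg_distrib]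
        rw [this, hW0 i j, neg_zero, zero_mul]
      · rw [if_neg h]
end
end

section
/- Let n ≥ 1 and use coordinates (x₁,...,x_n, y₁,...,y_n, z) on ℝ^{2n+1}. Define the vector fields ê_j := ∂_{x_j} + y_j ∂_z and ê_{n+j} := ∂_{y_j} − x_j ∂_z for 1 ≤ j ≤ n, and for a C² function φ set ∇_bφ := (ê₁φ,...,ê_{2n}φ) with |∇_bφ| its Euclidean length. Let r := (Σ_{j=1}^n (x_j² + y_j²))^{1/2}, ρ := (r⁴ + 4z²)^{1/4}, and wherever |∇_bφ| ≠ 0 define the Heisenberg-cylinder mean curvature H_φ := ρ·Σ_{I=1}^{2n} ê_I(ê_Iφ/|∇_bφ|) − (2n+1)·Σ_{I=1}^{2n} (ê_Iφ/|∇_bφ|)·ê_Iρ. Then for the function φ := c r² − z with c ∈ ℝ a constant, at every point of the hypersurface {z = c r²} with r ≠ 0 one has H_φ = 2(2n−1)c/(1+4c²)^{1/4}. -/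
open Set Finset

noncomputable section

/-- The `k`-th coordinate of a point of `ℝ^N` (zero if `k ≥ N`). -/
def cv (N k : ℕ) (x : Fin N → ℝ) : ℝ := if h : k < N then x ⟨k, h⟩ else 0

/-! Coordinates on `ℝ^{2n+1}`: the entries of index `0,...,n−1` are
`x₁,...,x_n`, those of index `n,...,2n−1` are `y₁,...,y_n`, and the entry of
index `2n` is `z`. -/

/-- The left-invariant horizontal vector fields of the Heisenberg group:
`ê_I = ∂_{x_I} + y_I ∂_z` (`I < n`) and `ê_{n+j} = ∂_{y_j} − x_j ∂_z`. -/
def hV (n I : ℕ) : (Fin (2 * n + 1) → ℝ) → (Fin (2 * n + 1) → ℝ) :=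
  fun x =>
    if I < n then ee (2 * n + 1) I + cv (2 * n + 1) (n + I) x • ee (2 * n + 1) (2 * n)
    else ee (2 * n + 1) I - cv (2 * n + 1) (I - n) x • ee (2 * n + 1) (2 * n)

/-- `|∇_bφ|`, the length of the horizontal gradient. -/
def nb (n : ℕ) (φ : (Fin (2 * n + 1) → ℝ) → ℝ) (x : Fin (2 * n + 1) → ℝ) : ℝ :=
  Real.sqrt (∑ I : Fin (2 * n), (vApp (hV n (I : ℕ)) φ x) ^ 2)

/-- `r = (Σ (x_j² + y_j²))^{1/2}`. -/
def rad (n : ℕ) (x : Fin (2 * n + 1) → ℝ) : ℝ :=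
  Real.sqrt (∑ I : Fin (2 * n), (cv (2 * n + 1) (I : ℕ) x) ^ 2)

/-- The Heisenberg distance `ρ = (r⁴ + 4z²)^{1/4}`. -/
def rho (n : ℕ) (x : Fin (2 * n + 1) → ℝ) : ℝ :=
  ((∑ I : Fin (2 * n), (cv (2 * n + 1) (I : ℕ) x) ^ 2) ^ 2
      + 4 * (cv (2 * n + 1) (2 * n) x) ^ 2) ^ ((1 : ℝ) / 4)

/-- The Heisenberg-cylinder horizontal mean curvature
`H_φ = ρ·Σ_I ê_I(ê_Iφ/|∇_bφ|) − (2n+1)·Σ_I (ê_Iφ/|∇_bφ|)·ê_Iρ`. -/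
def Hcyl (n : ℕ) (φ : (Fin (2 * n + 1) → ℝ) → ℝ) (x : Fin (2 * n + 1) → ℝ) : ℝ :=
  rho n x * (∑ I : Fin (2 * n), vApp (hV n (I : ℕ)) (fun y => vApp (hV n (I : ℕ)) φ y / nb n φ y) x)
    - (2 * n + 1) * (∑ I : Fin (2 * n), (vApp (hV n (I : ℕ)) φ x / nb n φ x) * vApp (hV n (I : ℕ)) (rho n) x)

-- my auxiliaries
namespace HCaux

variable (n : ℕ)

def SS (x : Fin (2 * n + 1) → ℝ) : ℝ := ∑ I : Fin (2 * n), x I.castSucc ^ 2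

def kk (I : Fin (2 * n)) : Fin (2 * n + 1) :=
  if h : (I : ℕ) < n then ⟨n + I, by omega⟩ else ⟨(I : ℕ) - n, by have := I.isLt; omega⟩

def sg (I : Fin (2 * n)) : ℝ := if (I : ℕ) < n then 1 else -1

lemma cv_lt {N k : ℕ} (h : k < N) (x : Fin N → ℝ) : cv N k x = x ⟨k, h⟩ := dif_pos h

lemma sum_cv_eq (x : Fin (2 * n + 1) → ℝ) :
    (∑ I : Fin (2 * n), (cv (2 * n + 1) (I : ℕ) x) ^ 2) = SS n x := by
  refine Finset.sum_congr rfl fun I _ => ?_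
  rw [cv_lt (by omega)]
  rfl

lemma cv_last (x : Fin (2 * n + 1) → ℝ) :
    cv (2 * n + 1) (2 * n) x = x (Fin.last (2 * n)) := by
  rw [cv_lt (by omega)]; rfl

lemma hV_low (I : ℕ) (x : Fin (2 * n + 1) → ℝ) (m : Fin (2 * n + 1)) (hm : (m : ℕ) < 2 * n) :
    hV n I x m = if (m : ℕ) = I then 1 else 0 := by
  unfold hV
  have hne : ¬ ((m : ℕ) = 2 * n) := by omega
  split <;> simp [ee, Pi.add_apply, Pi.sub_apply, Pi.smul_apply, hne]

lemma hV_last (I : Fin (2 * n)) (x : Fin (2 * n + 1) → ℝ) :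
    hV n (I : ℕ) x (Fin.last (2 * n)) = sg n I * x (kk n I) := by
  unfold hV sg kk
  rcases lt_or_ge (I : ℕ) n with h | h
  · rw [if_pos h, dif_pos h, if_pos h]
    have h1 : ¬ (2 * n = (I : ℕ)) := by omega
    have h2 : ¬ (n * 2 = (I : ℕ)) := by omega
    simp [ee, cv_lt (show n + (I : ℕ) < 2 * n + 1 by omega), Fin.last, h1, h2]
  · rw [if_neg (by omega), dif_neg (by omega), if_neg (by omega)]
    have h1 : ¬ (2 * n = (I : ℕ)) := by omega
    have h2 : ¬ (n * 2 = (I : ℕ)) := by omega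
    simp [ee, cv_lt (show (I : ℕ) - n < 2 * n + 1 by have := I.isLt; omega), Fin.last, h1, h2]


def DSS (x : Fin (2 * n + 1) → ℝ) : (Fin (2 * n + 1) → ℝ) →L[ℝ] ℝ :=
  ∑ I : Fin (2 * n), (2 * x I.castSucc) • ContinuousLinearMap.proj I.castSucc

lemma hasF_SS (x : Fin (2 * n + 1) → ℝ) : HasFDerivAt (SS n) (DSS n x) x := by
  unfold SS DSS
  refine HasFDerivAt.fun_sum fun I _ => ?_
  have h := hasFDerivAt_apply (𝕜 := ℝ) I.castSucc x
  have h2 := h.fun_mul h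
  have hf : (fun y : Fin (2 * n + 1) → ℝ => y I.castSucc ^ 2)
      = fun y => y I.castSucc * y I.castSucc := by funext y; ring
  rw [hf]
  refine h2.congr_fderiv ?_
  ext v
  simp [ContinuousLinearMap.smul_apply, two_mul, add_smul]

lemma DSS_apply (x v : Fin (2 * n + 1) → ℝ) :
    DSS n x v = ∑ I : Fin (2 * n), 2 * x I.castSucc * v I.castSucc := by
  simp [DSS]

lemma DSS_hV (x : Fin (2 * n + 1) → ℝ) (I : Fin (2 * n)) :
    DSS n x (hV n (I : ℕ) x) = 2 * x I.castSucc := by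
  rw [DSS_apply]
  have : ∀ J : Fin (2 * n), 2 * x J.castSucc * (hV n (I : ℕ) x) J.castSucc
      = if J = I then 2 * x J.castSucc else 0 := by
    intro J
    rw [hV_low n (I : ℕ) x J.castSucc (by simpa using J.isLt)]
    simp [Fin.val_eq_val]
  rw [Finset.sum_congr rfl fun J _ => this J, Finset.sum_ite_eq' _ I]
  simp

def ph (c : ℝ) (x : Fin (2 * n + 1) → ℝ) : ℝ := c * SS n x - x (Fin.last (2 * n))

def Dph (c : ℝ) (x : Fin (2 * n + 1) → ℝ) : (Fin (2 * n + 1) → ℝ) →L[ℝ] ℝ :=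
  c • DSS n x - ContinuousLinearMap.proj (Fin.last (2 * n))

lemma hasF_ph (c : ℝ) (x : Fin (2 * n + 1) → ℝ) : HasFDerivAt (ph n c) (Dph n c x) x :=
  ((hasF_SS n x).const_mul c).sub (hasFDerivAt_apply (𝕜 := ℝ) (Fin.last (2 * n)) x)

lemma Dph_hV (c : ℝ) (x : Fin (2 * n + 1) → ℝ) (I : Fin (2 * n)) :
    Dph n c x (hV n (I : ℕ) x) = 2 * c * x I.castSucc - sg n I * x (kk n I) := by
  rw [Dph, ContinuousLinearMap.sub_apply, ContinuousLinearMap.smul_apply, DSS_hV,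
    ContinuousLinearMap.proj_apply, hV_last]
  simp [smul_eq_mul]
  ring

lemma vApp_ph (c : ℝ) (x : Fin (2 * n + 1) → ℝ) (I : Fin (2 * n)) :
    vApp (hV n (I : ℕ)) (ph n c) x = 2 * c * x I.castSucc - sg n I * x (kk n I) := by
  rw [vApp, (hasF_ph n c x).fderiv, Dph_hV]


lemma sum_split (f : Fin (2 * n) → ℝ) :
    ∑ I : Fin (2 * n), f I
      = ∑ i : Fin n, f ⟨(i : ℕ), by omega⟩ + ∑ i : Fin n, f ⟨n + (i : ℕ), by omega⟩ := by
  have e : n + n = 2 * n := (two_mul n).symm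
  rw [← Fin.sum_congr' f e, Fin.sum_univ_add]
  congr 1 <;> exact Finset.sum_congr rfl fun i _ => congrArg f (Fin.ext (by simp))

-- behavior of sg, kk on the two halves
lemma sg_lo (i : Fin n) : sg n ⟨(i : ℕ), by omega⟩ = 1 := by
  simp [sg, i.isLt]

lemma sg_hi (i : Fin n) : sg n ⟨n + (i : ℕ), by omega⟩ = -1 := by
  simp [sg]

lemma kk_lo (i : Fin n) : kk n ⟨(i : ℕ), by omega⟩ = ⟨n + (i : ℕ), by omega⟩ := by
  simp [kk, i.isLt]

lemma kk_hi (i : Fin n) : kk n ⟨n + (i : ℕ), by omega⟩ = ⟨(i : ℕ), by omega⟩ := by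
  have : ¬ (n + (i : ℕ) < n) := by omega
  simp only [kk, this, dif_neg, not_false_iff]
  exact Fin.ext (by simp)

lemma castSucc_lo (i : Fin n) :
    (⟨(i : ℕ), by omega⟩ : Fin (2 * n)).castSucc = (⟨(i : ℕ), by omega⟩ : Fin (2 * n + 1)) := rfl

lemma castSucc_hi (i : Fin n) :
    (⟨n + (i : ℕ), by omega⟩ : Fin (2 * n)).castSucc
      = (⟨n + (i : ℕ), by omega⟩ : Fin (2 * n + 1)) := rfl

lemma sum_t_a (x : Fin (2 * n + 1) → ℝ) :
    ∑ I : Fin (2 * n), (sg n I * x (kk n I)) * x I.castSucc = 0 := by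
  rw [sum_split]
  simp only [sg_lo, sg_hi, kk_lo, kk_hi, castSucc_lo, castSucc_hi]
  ring_nf
  rw [← Finset.sum_add_distrib]
  refine Finset.sum_eq_zero fun i _ => by ring

lemma sum_t_sq (x : Fin (2 * n + 1) → ℝ) :
    ∑ I : Fin (2 * n), (sg n I * x (kk n I)) ^ 2 = SS n x := by
  rw [sum_split, SS, sum_split n (fun I => x I.castSucc ^ 2)]
  simp only [sg_lo, sg_hi, kk_lo, kk_hi, castSucc_lo, castSucc_hi, one_mul, neg_one_mul, neg_sq]
  exact add_comm _ _

lemma sum_u_sq (c : ℝ) (x : Fin (2 * n + 1) → ℝ) :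
    ∑ I : Fin (2 * n), (2 * c * x I.castSucc - sg n I * x (kk n I)) ^ 2
      = (1 + 4 * c ^ 2) * SS n x := by
  have expand : ∀ I : Fin (2 * n),
      (2 * c * x I.castSucc - sg n I * x (kk n I)) ^ 2
        = 4 * c ^ 2 * x I.castSucc ^ 2
          - 4 * c * ((sg n I * x (kk n I)) * x I.castSucc)
          + (sg n I * x (kk n I)) ^ 2 := fun I => by ring
  rw [Finset.sum_congr rfl fun I _ => expand I]
  rw [Finset.sum_add_distrib, Finset.sum_sub_distrib, ← Finset.mul_sum, ← Finset.mul_sum,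
    sum_t_a, sum_t_sq, SS]
  ring

lemma sum_u_a (c : ℝ) (x : Fin (2 * n + 1) → ℝ) :
    ∑ I : Fin (2 * n), (2 * c * x I.castSucc - sg n I * x (kk n I)) * x I.castSucc
      = 2 * c * SS n x := by
  have expand : ∀ I : Fin (2 * n),
      (2 * c * x I.castSucc - sg n I * x (kk n I)) * x I.castSucc
        = 2 * c * x I.castSucc ^ 2 - (sg n I * x (kk n I)) * x I.castSucc := fun I => by ring
  rw [Finset.sum_congr rfl fun I _ => expand I, Finset.sum_sub_distrib, ← Finset.mul_sum,
    sum_t_a, SS]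
  ring

lemma sum_u_t (c : ℝ) (x : Fin (2 * n + 1) → ℝ) :
    ∑ I : Fin (2 * n), (2 * c * x I.castSucc - sg n I * x (kk n I)) * (sg n I * x (kk n I))
      = 2 * c * 0 - SS n x := by
  have expand : ∀ I : Fin (2 * n),
      (2 * c * x I.castSucc - sg n I * x (kk n I)) * (sg n I * x (kk n I))
        = 2 * c * ((sg n I * x (kk n I)) * x I.castSucc) - (sg n I * x (kk n I)) ^ 2 :=
    fun I => by ring
  rw [Finset.sum_congr rfl fun I _ => expand I, Finset.sum_sub_distrib, ← Finset.mul_sum,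
    sum_t_a, sum_t_sq]


lemma rad_eq (x : Fin (2 * n + 1) → ℝ) : rad n x = Real.sqrt (SS n x) := by
  rw [rad, sum_cv_eq]

lemma nb_ph (c : ℝ) (x : Fin (2 * n + 1) → ℝ) :
    nb n (ph n c) x = Real.sqrt (1 + 4 * c ^ 2) * rad n x := by
  rw [nb, Finset.sum_congr rfl fun I _ => by rw [vApp_ph], sum_u_sq, rad_eq,
    Real.sqrt_mul (by positivity)]

lemma SS_nonneg (x : Fin (2 * n + 1) → ℝ) : 0 ≤ SS n x :=
  Finset.sum_nonneg fun _ _ => sq_nonneg _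

lemma hasF_rad (x : Fin (2 * n + 1) → ℝ) (hS : SS n x ≠ 0) :
    HasFDerivAt (rad n) ((1 / (2 * rad n x)) • DSS n x) x := by
  have hfun : rad n = fun y => Real.sqrt (SS n y) := funext (rad_eq n)
  rw [hfun]
  have := (Real.hasDerivAt_sqrt hS).comp_hasFDerivAt x (hasF_SS n x)
  exact this

lemma hasF_inv_den (c : ℝ) (x : Fin (2 * n + 1) → ℝ) (hS : SS n x ≠ 0)
    (hd : Real.sqrt (1 + 4 * c ^ 2) * rad n x ≠ 0) :
    HasFDerivAt (fun y => (Real.sqrt (1 + 4 * c ^ 2) * rad n y)⁻¹)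
      ((-((Real.sqrt (1 + 4 * c ^ 2) * rad n x) ^ 2)⁻¹) •
        (Real.sqrt (1 + 4 * c ^ 2) • ((1 / (2 * rad n x)) • DSS n x))) x := by
  have hden : HasFDerivAt (fun y => Real.sqrt (1 + 4 * c ^ 2) * rad n y)
      (Real.sqrt (1 + 4 * c ^ 2) • ((1 / (2 * rad n x)) • DSS n x)) x :=
    (hasF_rad n x hS).const_mul _
  exact (hasDerivAt_inv hd).comp_hasFDerivAt x hden

-- the quotient function ê_Iφ/|∇_bφ| in explicit form and its directional derivative
lemma vApp_g (c : ℝ) (x : Fin (2 * n + 1) → ℝ) (hS : SS n x ≠ 0) (I : Fin (2 * n)) :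
    vApp (hV n (I : ℕ))
      (fun y => (2 * c * y I.castSucc - sg n I * y (kk n I))
        / (Real.sqrt (1 + 4 * c ^ 2) * rad n y)) x
      = (2 * c * x I.castSucc - sg n I * x (kk n I)) *
          ((-((Real.sqrt (1 + 4 * c ^ 2) * rad n x) ^ 2)⁻¹) *
            (Real.sqrt (1 + 4 * c ^ 2) * ((1 / (2 * rad n x)) * (2 * x I.castSucc))))
        + (Real.sqrt (1 + 4 * c ^ 2) * rad n x)⁻¹ * (2 * c) := by
  have hK : (0:ℝ) < Real.sqrt (1 + 4 * c ^ 2) := Real.sqrt_pos.2 (by positivity)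
  have hr : rad n x ≠ 0 := by
    rw [rad_eq]
    exact Real.sqrt_ne_zero'.2 (lt_of_le_of_ne (SS_nonneg n x) (Ne.symm hS))
  have hd : Real.sqrt (1 + 4 * c ^ 2) * rad n x ≠ 0 := mul_ne_zero hK.ne' hr
  have hnum : HasFDerivAt (fun y : Fin (2 * n + 1) → ℝ =>
      2 * c * y I.castSucc - sg n I * y (kk n I))
      ((2 * c) • ContinuousLinearMap.proj I.castSucc
        - sg n I • ContinuousLinearMap.proj (kk n I)) x :=
    ((hasFDerivAt_apply (𝕜 := ℝ) I.castSucc x).const_mul (2 * c)).sub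
      ((hasFDerivAt_apply (𝕜 := ℝ) (kk n I) x).const_mul (sg n I))
  have hfun : (fun y : Fin (2 * n + 1) → ℝ =>
      (2 * c * y I.castSucc - sg n I * y (kk n I)) / (Real.sqrt (1 + 4 * c ^ 2) * rad n y))
      = fun y => (2 * c * y I.castSucc - sg n I * y (kk n I))
          * (Real.sqrt (1 + 4 * c ^ 2) * rad n y)⁻¹ := by
    funext y; rw [div_eq_mul_inv]
  have hg := hnum.fun_mul (hasF_inv_den n c x hS hd)
  rw [vApp, hfun, hg.fderiv]
  -- now evaluate the continuous linear map at hV n I x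
  have e1 : (hV n (I : ℕ) x) I.castSucc = 1 := by
    rw [hV_low n (I : ℕ) x I.castSucc (by simpa using I.isLt)]
    simp
  have hkklt : ((kk n I : Fin (2 * n + 1)) : ℕ) < 2 * n := by
    have := I.isLt
    rw [kk]
    split <;> simp <;> omega
  have hkkne : ((kk n I : Fin (2 * n + 1)) : ℕ) ≠ (I : ℕ) := by
    have := I.isLt
    rw [kk]
    split <;> simp <;> omega
  have e2 : (hV n (I : ℕ) x) (kk n I) = 0 := by
    rw [hV_low n (I : ℕ) x (kk n I) hkklt, if_neg hkkne]
  simp only [ContinuousLinearMap.add_apply, ContinuousLinearMap.smul_apply,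
    ContinuousLinearMap.sub_apply, ContinuousLinearMap.proj_apply, DSS_hV, e1, e2,
    smul_eq_mul]
  ring


lemma rho_eq : rho n = fun y =>
    (SS n y ^ 2 + 4 * (y (Fin.last (2 * n))) ^ 2) ^ ((1 : ℝ) / 4) :=
  funext fun y => by rw [rho, sum_cv_eq, cv_last]

lemma vApp_rho (x : Fin (2 * n + 1) → ℝ) (hS : SS n x ≠ 0) (I : Fin (2 * n)) :
    vApp (hV n (I : ℕ)) (rho n) x
      = (1 / 4 * (SS n x ^ 2 + 4 * (x (Fin.last (2 * n))) ^ 2) ^ ((1 : ℝ) / 4 - 1)) *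
          (2 * SS n x * (2 * x I.castSucc)
            + 8 * x (Fin.last (2 * n)) * (sg n I * x (kk n I))) := by
  have hSpos : 0 < SS n x := lt_of_le_of_ne (SS_nonneg n x) (Ne.symm hS)
  set DB : (Fin (2 * n + 1) → ℝ) →L[ℝ] ℝ :=
    (2 * SS n x) • DSS n x
      + (8 * x (Fin.last (2 * n))) • ContinuousLinearMap.proj (Fin.last (2 * n)) with hDB
  have hsq : HasFDerivAt (fun y => SS n y ^ 2) ((2 * SS n x) • DSS n x) x := by
    have h2 := (hasF_SS n x).fun_mul (hasF_SS n x)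
    have hf : (fun y => SS n y ^ 2) = fun y => SS n y * SS n y := by funext y; ring
    rw [hf]
    refine h2.congr_fderiv ?_
    ext v
    simp [ContinuousLinearMap.smul_apply, two_mul, add_smul]
  have hz2 : HasFDerivAt (fun y : Fin (2 * n + 1) → ℝ => 4 * (y (Fin.last (2 * n))) ^ 2)
      ((8 * x (Fin.last (2 * n))) • ContinuousLinearMap.proj (R := ℝ)
        (φ := fun _ : Fin (2 * n + 1) => ℝ) (Fin.last (2 * n))) x := by
    have h := hasFDerivAt_apply (𝕜 := ℝ) (Fin.last (2 * n)) x
    have h2 := (h.fun_mul h).const_mul (4 : ℝ)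
    have hf : (fun y : Fin (2 * n + 1) → ℝ => 4 * (y (Fin.last (2 * n))) ^ 2)
        = fun y => 4 * (y (Fin.last (2 * n)) * y (Fin.last (2 * n))) := by funext y; ring
    rw [hf]
    refine h2.congr_fderiv ?_
    ext v
    simp [ContinuousLinearMap.smul_apply, smul_eq_mul]
    ring
  have hB : HasFDerivAt (fun y => SS n y ^ 2 + 4 * (y (Fin.last (2 * n))) ^ 2) DB x :=
    hsq.add hz2
  have hB0 : SS n x ^ 2 + 4 * (x (Fin.last (2 * n))) ^ 2 ≠ 0 := by positivity
  have hrho := (Real.hasDerivAt_rpow_const (p := (1 : ℝ) / 4)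
    (Or.inl hB0)).comp_hasFDerivAt x hB
  have hfd : fderiv ℝ (fun y => (SS n y ^ 2 + 4 * (y (Fin.last (2 * n))) ^ 2) ^ ((1 : ℝ) / 4)) x
      = ((1 : ℝ) / 4 *
          (SS n x ^ 2 + 4 * (x (Fin.last (2 * n))) ^ 2) ^ ((1 : ℝ) / 4 - 1)) • DB :=
    HasFDerivAt.fderiv (by exact hrho)
  rw [vApp, rho_eq, hfd]
  simp only [hDB, ContinuousLinearMap.smul_apply, ContinuousLinearMap.add_apply,
    ContinuousLinearMap.proj_apply, DSS_hV, hV_last, smul_eq_mul]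

end HCaux

open HCaux

/-- Proposition 6.1(a): the hypersurface `z = c r²` in the
Heisenberg cylinder `(H_n \ {0}, ρ^{−2}Θ)` has constant horizontal (p-)mean
curvature `2(2n−1)c/(1+4c²)^{1/4}`. -/
theorem heisenberg_cylinder_paraboloid_mean_curvature
    (n : ℕ) (hn : 1 ≤ n) (c : ℝ) :
    ∀ x : Fin (2 * n + 1) → ℝ, rad n x ≠ 0 →
      cv (2 * n + 1) (2 * n) x = c * (∑ I : Fin (2 * n), (cv (2 * n + 1) (I : ℕ) x) ^ 2) →
      Hcyl n (fun y => c * (∑ I : Fin (2 * n), (cv (2 * n + 1) (I : ℕ) y) ^ 2)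
          - cv (2 * n + 1) (2 * n) y) x
        = 2 * (2 * n - 1) * c / (1 + 4 * c ^ 2) ^ ((1 : ℝ) / 4) := by
  intro x hr0 hz
  have hS0 : SS n x ≠ 0 := by
    intro h
    apply hr0
    rw [rad_eq, h, Real.sqrt_zero]
  have hSpos : 0 < SS n x := lt_of_le_of_ne (SS_nonneg n x) (Ne.symm hS0)
  set r : ℝ := rad n x with hrdef
  have hr : 0 < r := by
    rw [hrdef, rad_eq]
    exact Real.sqrt_pos.2 hSpos
  set K : ℝ := Real.sqrt (1 + 4 * c ^ 2) with hKdef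
  have hK : 0 < K := Real.sqrt_pos.2 (by positivity)
  set T : ℝ := (1 + 4 * c ^ 2) ^ ((1 : ℝ) / 4) with hTdef
  have hT : 0 < T := Real.rpow_pos_of_pos (by positivity) _
  have hKT : K = T ^ 2 := by
    rw [hKdef, hTdef, Real.sqrt_eq_rpow, ← Real.rpow_natCast ((1 + 4 * c ^ 2) ^ ((1:ℝ)/4)) 2,
      ← Real.rpow_mul (by positivity)]
    norm_num
  have hrS : SS n x = r ^ 2 := by
    rw [hrdef, rad_eq, Real.sq_sqrt hSpos.le]
  have hz' : x (Fin.last (2 * n)) = c * SS n x := by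
    rw [cv_last, sum_cv_eq] at hz
    exact hz
  have hphi : (fun y => c * (∑ I : Fin (2 * n), (cv (2 * n + 1) (I : ℕ) y) ^ 2)
      - cv (2 * n + 1) (2 * n) y) = ph n c := by
    funext y
    rw [sum_cv_eq, cv_last, ph]
  rw [hphi]
  simp only [Hcyl]
  -- the first sum
  have hterm1 : ∀ I : Fin (2 * n),
      vApp (hV n (I : ℕ)) (fun y => vApp (hV n (I : ℕ)) (ph n c) y / nb n (ph n c) y) x
        = (-(((K * r) ^ 2)⁻¹ * (K / r)))
            * ((2 * c * x I.castSucc - sg n I * x (kk n I)) * x I.castSucc)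
          + (K * r)⁻¹ * (2 * c) := by
    intro I
    have hfun : (fun y => vApp (hV n (I : ℕ)) (ph n c) y / nb n (ph n c) y)
        = fun y => (2 * c * y I.castSucc - sg n I * y (kk n I)) / (K * rad n y) :=
      funext fun y => by rw [vApp_ph, nb_ph]
    rw [hfun, vApp_g n c x hS0 I]
    ring
  have hsum1 : (∑ I : Fin (2 * n),
      vApp (hV n (I : ℕ)) (fun y => vApp (hV n (I : ℕ)) (ph n c) y / nb n (ph n c) y) x)
      = (-(((K * r) ^ 2)⁻¹ * (K / r))) * (2 * c * SS n x)
        + (2 * n : ℕ) * ((K * r)⁻¹ * (2 * c)) := by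
    rw [Finset.sum_congr rfl fun I _ => hterm1 I, Finset.sum_add_distrib, ← Finset.mul_sum,
      sum_u_a, Finset.sum_const, Finset.card_univ, Fintype.card_fin, nsmul_eq_mul]
  -- the second sum
  have hterm2 : ∀ I : Fin (2 * n),
      (vApp (hV n (I : ℕ)) (ph n c) x / nb n (ph n c) x) * vApp (hV n (I : ℕ)) (rho n) x
        = ((1 / 4 * (SS n x ^ 2 + 4 * (x (Fin.last (2 * n))) ^ 2) ^ ((1 : ℝ) / 4 - 1))
            * (K * r)⁻¹)
          * (4 * SS n x
              * ((2 * c * x I.castSucc - sg n I * x (kk n I)) * x I.castSucc)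
            + 8 * x (Fin.last (2 * n))
              * ((2 * c * x I.castSucc - sg n I * x (kk n I)) * (sg n I * x (kk n I)))) := by
    intro I
    rw [vApp_ph, nb_ph, vApp_rho n x hS0 I, ← hrdef, ← hKdef]
    ring
  have hzero : (∑ I : Fin (2 * n),
      (4 * SS n x * ((2 * c * x I.castSucc - sg n I * x (kk n I)) * x I.castSucc)
        + 8 * x (Fin.last (2 * n))
          * ((2 * c * x I.castSucc - sg n I * x (kk n I)) * (sg n I * x (kk n I))))) = 0 := by
    rw [Finset.sum_add_distrib, ← Finset.mul_sum, ← Finset.mul_sum, sum_u_a, sum_u_t, hz']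
    ring
  have hsum2 : (∑ I : Fin (2 * n),
      (vApp (hV n (I : ℕ)) (ph n c) x / nb n (ph n c) x) * vApp (hV n (I : ℕ)) (rho n) x) = 0 := by
    rw [Finset.sum_congr rfl fun I _ => hterm2 I, ← Finset.mul_sum, hzero, mul_zero]
  rw [hsum1, hsum2, mul_zero, sub_zero]
  -- the value of rho at x
  have hbase : SS n x ^ 2 + 4 * (x (Fin.last (2 * n))) ^ 2 = r ^ (4 : ℕ) * (1 + 4 * c ^ 2) := by
    rw [hz', hrS]
    ring
  have hrho_val : rho n x = r * T := by
    rw [congrFun (rho_eq n) x, hbase, Real.mul_rpow (by positivity) (by positivity),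
      ← Real.rpow_natCast r 4, ← Real.rpow_mul hr.le, hTdef]
    norm_num
  rw [hrho_val, hrS, hKT]
  push_cast
  field_simp
  ring
end
end

section
/- Let n ≥ 1 and use coordinates (x₁,...,x_n, y₁,...,y_n, z) on ℝ^{2n+1}. Define ê_j := ∂_{x_j} + y_j ∂_z and ê_{n+j} := ∂_{y_j} − x_j ∂_z for 1 ≤ j ≤ n, ∇_bφ := (ê₁φ,...,ê_{2n}φ), r := (Σ_{j=1}^n (x_j² + y_j²))^{1/2}, ρ := (r⁴ + 4z²)^{1/4}, and wherever |∇_bφ| ≠ 0 set H_φ := ρ·Σ_{I=1}^{2n} ê_I(ê_Iφ/|∇_bφ|) − (2n+1)·Σ_{I=1}^{2n} (ê_Iφ/|∇_bφ|)·ê_Iρ. Then for the function φ := ρ⁴ − c (c > 0 a constant), one has |∇_bφ| = 4rρ² and H_φ = 0 at every point with r ≠ 0; in particular the Heisenberg spheres {ρ⁴ = c} are horizontally (p-)minimal hypersurfaces of the Heisenberg cylinder. -/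
open Set Finset

noncomputable section

namespace HSM
def uu (n : ℕ) (y : Fin (2*n+1) → ℝ) : ℝ := ∑ I : Fin (2*n), (cv (2*n+1) (I:ℕ) y)^2
def zz (n : ℕ) (y : Fin (2*n+1) → ℝ) : ℝ := cv (2*n+1) (2*n) y
def PP (n : ℕ) (y : Fin (2*n+1) → ℝ) : ℝ := (uu n y)^2 + 4 * (zz n y)^2
def sg (n I : ℕ) (y : Fin (2*n+1) → ℝ) : ℝ :=
  if I < n then cv (2*n+1) (n+I) y else -(cv (2*n+1) (I-n) y)
lemma cv_apply {N k : ℕ} (h : k < N) (y : Fin N → ℝ) : cv N k y = y ⟨k, h⟩ := dif_pos h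
def pr (N k : ℕ) (h : k < N) : (Fin N → ℝ) →L[ℝ] ℝ := ContinuousLinearMap.proj ⟨k, h⟩
@[simp] lemma pr_apply {N k : ℕ} (h : k < N) (v : Fin N → ℝ) : pr N k h v = v ⟨k, h⟩ := rfl
lemma hasFDerivAt_cv {N k : ℕ} (h : k < N) (x : Fin N → ℝ) :
    HasFDerivAt (cv N k) (pr N k h) x := by
  have e : cv N k = fun y : Fin N → ℝ => pr N k h y := by funext y; simp [cv, h]
  rw [e]; exact (pr N k h).hasFDerivAt
lemma hV_eval {n : ℕ} (I : ℕ) (y : Fin (2*n+1) → ℝ) (k : ℕ) (hk : k < 2*n+1) :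
    hV n I y ⟨k, hk⟩ = (if k = I then 1 else 0) + sg n I y * (if k = 2*n then 1 else 0) := by
  unfold hV sg ee
  split_ifs with h h1 h2 <;>
    simp_all [Pi.add_apply, Pi.sub_apply, Pi.smul_apply, smul_eq_mul] <;> ring

-- Lu : derivative of uu
def Lu (n : ℕ) (x : Fin (2*n+1) → ℝ) : (Fin (2*n+1) → ℝ) →L[ℝ] ℝ :=
  ∑ I : Fin (2*n), (2 * cv (2*n+1) (I:ℕ) x) • pr (2*n+1) (I:ℕ) (Nat.lt_succ_of_lt I.isLt)

lemma hasFDerivAt_uu (x : Fin (2*n+1) → ℝ) : HasFDerivAt (uu n) (Lu n x) x := by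
  apply HasFDerivAt.fun_sum
  intro I _
  have h := ((hasDerivAt_pow 2 (cv (2*n+1) (I:ℕ) x)).comp_hasFDerivAt x
    (hasFDerivAt_cv (Nat.lt_succ_of_lt I.isLt) x))
  simpa [Function.comp_def] using h

def Lsg (n I : ℕ) (hI : I < 2*n) : (Fin (2*n+1) → ℝ) →L[ℝ] ℝ :=
  if h : I < n then pr (2*n+1) (n+I) (by omega) else - pr (2*n+1) (I-n) (by omega)

lemma hasFDerivAt_sg (I : ℕ) (hI : I < 2*n) (x : Fin (2*n+1) → ℝ) :
    HasFDerivAt (sg n I) (Lsg n I hI) x := by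
  unfold sg Lsg
  split_ifs with h
  · exact hasFDerivAt_cv (by omega) x
  · exact (hasFDerivAt_cv (by omega) x).neg

def LP (n : ℕ) (x : Fin (2*n+1) → ℝ) : (Fin (2*n+1) → ℝ) →L[ℝ] ℝ :=
  (2 * uu n x) • Lu n x + (8 * zz n x) • pr (2*n+1) (2*n) (by omega)

lemma hasFDerivAt_PP (x : Fin (2*n+1) → ℝ) : HasFDerivAt (PP n) (LP n x) x := by
  have h1 := (hasDerivAt_pow 2 (uu n x)).comp_hasFDerivAt x (hasFDerivAt_uu x)
  have h2 := (((hasDerivAt_pow 2 (zz n x)).comp_hasFDerivAt x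
      (hasFDerivAt_cv (show 2*n < 2*n+1 by omega) x)).const_mul (4:ℝ))
  have h := h1.add h2
  have e : LP n x = (((2:ℕ):ℝ) * uu n x ^ (2-1)) • Lu n x
      + (4:ℝ) • ((((2:ℕ):ℝ) * zz n x ^ (2-1)) • pr (2*n+1) (2*n) (by omega)) := by
    ext v
    simp [LP]
    ring
  rw [e]; exact h

lemma cv_hV {n : ℕ} (I : ℕ) (k : ℕ) (hk : k < 2*n+1) (y : Fin (2*n+1) → ℝ) :
    cv (2*n+1) k (hV n I y) = (if k = I then 1 else 0) + sg n I y * (if k = 2*n then 1 else 0) := by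
  rw [cv_apply hk]; exact hV_eval I y k hk

lemma Lu_hV (x y : Fin (2*n+1) → ℝ) (I : Fin (2*n)) :
    Lu n x (hV n (I:ℕ) y) = 2 * cv (2*n+1) (I:ℕ) x := by
  have step : ∀ J : Fin (2*n), 2 * cv (2*n+1) (J:ℕ) x * (pr (2*n+1) (J:ℕ) (Nat.lt_succ_of_lt J.isLt)) (hV n (I:ℕ) y)
      = if J = I then 2 * cv (2*n+1) (I:ℕ) x else 0 := by
    intro J
    rw [pr_apply, hV_eval]
    have h2 : ¬ ((J:ℕ) = 2*n) := by have := J.isLt; omega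
    by_cases hJ : J = I
    · subst hJ; simp [h2]
    · have : ¬ ((J:ℕ) = (I:ℕ)) := fun h => hJ (Fin.ext h)
      simp [h2, this, hJ]
  unfold Lu
  rw [ContinuousLinearMap.sum_apply]
  simp only [ContinuousLinearMap.smul_apply, smul_eq_mul]
  rw [Finset.sum_congr rfl (fun J _ => step J)]
  simp

lemma prz_hV (y : Fin (2*n+1) → ℝ) (I : Fin (2*n)) (h : 2*n < 2*n+1) :
    pr (2*n+1) (2*n) h (hV n (I:ℕ) y) = sg n (I:ℕ) y := by
  rw [pr_apply, hV_eval]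
  have : ¬ (2*n = (I:ℕ)) := by have := I.isLt; omega
  simp [this]

lemma prI_hV (y : Fin (2*n+1) → ℝ) (I : Fin (2*n)) (h : (I:ℕ) < 2*n+1) :
    pr (2*n+1) (I:ℕ) h (hV n (I:ℕ) y) = 1 := by
  rw [pr_apply, hV_eval]
  have : ¬ ((I:ℕ) = 2*n) := by have := I.isLt; omega
  simp [this]

lemma Lsg_hV (y : Fin (2*n+1) → ℝ) (I : Fin (2*n)) (h : (I:ℕ) < 2*n) :
    Lsg n (I:ℕ) h (hV n (I:ℕ) y) = 0 := by
  have hn1 : 1 ≤ n := by have := I.isLt; omega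
  unfold Lsg
  split_ifs with hc
  · rw [pr_apply, hV_eval]
    have h1 : ¬ (n + (I:ℕ) = (I:ℕ)) := by omega
    have h2 : ¬ (n + (I:ℕ) = 2*n) := by omega
    simp [h1, h2]; omega
  · rw [ContinuousLinearMap.neg_apply, pr_apply, hV_eval]
    have h1 : ¬ ((I:ℕ) - n = (I:ℕ)) := by omega
    have h2 : ¬ ((I:ℕ) - n = 2*n) := by omega
    simp [h1, h2]

lemma LP_hV (x y : Fin (2*n+1) → ℝ) (I : Fin (2*n)) :
    LP n x (hV n (I:ℕ) y) = 4 * uu n x * cv (2*n+1) (I:ℕ) x + 8 * zz n x * sg n (I:ℕ) y := by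
  unfold LP
  rw [ContinuousLinearMap.add_apply, ContinuousLinearMap.smul_apply,
    ContinuousLinearMap.smul_apply, Lu_hV, prz_hV]
  simp; ring


def Fh (n : ℕ) (I : Fin (2*n)) (y : Fin (2*n+1) → ℝ) : ℝ :=
  4 * uu n y * cv (2*n+1) (I:ℕ) y + 8 * zz n y * sg n (I:ℕ) y

lemma vApp_phi (c : ℝ) (I : Fin (2*n)) (y : Fin (2*n+1) → ℝ) :
    vApp (hV n (I:ℕ)) (fun w => PP n w - c) y = Fh n I y := by
  unfold vApp
  rw [((hasFDerivAt_PP y).sub_const c).fderiv]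
  exact LP_hV y y I

def tau (n : ℕ) (I : Fin (2*n)) : Fin (2*n) :=
  if h : (I:ℕ) < n then ⟨n + (I:ℕ), by omega⟩ else ⟨(I:ℕ) - n, by have := I.isLt; omega⟩

lemma tau_val_pos {I : Fin (2*n)} (h : (I:ℕ) < n) : ((tau n I : ℕ)) = n + (I:ℕ) := by
  simp [tau, h]

lemma tau_val_neg {I : Fin (2*n)} (h : ¬ (I:ℕ) < n) : ((tau n I : ℕ)) = (I:ℕ) - n := by
  simp [tau, h]

lemma tau_tau (I : Fin (2*n)) : tau n (tau n I) = I := by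
  have hI := I.isLt
  apply Fin.ext
  by_cases h : (I:ℕ) < n
  · rw [tau_val_neg (by rw [tau_val_pos h]; omega), tau_val_pos h]; omega
  · rw [tau_val_pos (by rw [tau_val_neg h]; omega), tau_val_neg h]; omega

lemma sum_sg_sq (y : Fin (2*n+1) → ℝ) :
    ∑ I : Fin (2*n), (sg n (I:ℕ) y)^2 = uu n y := by
  have e : ∀ I : Fin (2*n), (sg n (I:ℕ) y)^2 = (cv (2*n+1) ((tau n I : ℕ)) y)^2 := by
    intro I
    by_cases h : (I:ℕ) < n
    · rw [tau_val_pos h]; unfold sg; rw [if_pos h]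
    · rw [tau_val_neg h]; unfold sg; rw [if_neg h, neg_sq]
  rw [Finset.sum_congr rfl (fun I _ => e I)]
  exact Fintype.sum_bijective (tau n) (Function.Involutive.bijective tau_tau)
    (fun I => (cv (2*n+1) ((tau n I : ℕ)) y)^2) (fun I => (cv (2*n+1) (I:ℕ) y)^2) (fun I => rfl)

lemma sum_cv_sg (y : Fin (2*n+1) → ℝ) :
    ∑ I : Fin (2*n), cv (2*n+1) (I:ℕ) y * sg n (I:ℕ) y = 0 := by
  apply Finset.sum_involution (fun I _ => tau n I)
  · intro I _
    have hI := I.isLt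
    by_cases h : (I:ℕ) < n
    · rw [tau_val_pos h]; unfold sg
      rw [if_pos h, if_neg (show ¬ (n + (I:ℕ) < n) by omega)]
      rw [show n + (I:ℕ) - n = (I:ℕ) by omega]; ring
    · rw [tau_val_neg h]; unfold sg
      rw [if_neg h, if_pos (show (I:ℕ) - n < n by omega)]
      rw [show n + ((I:ℕ) - n) = (I:ℕ) by omega]; ring
  · intro I _ _ hEq
    have hI := I.isLt
    have hv := congrArg Fin.val hEq
    by_cases h : (I:ℕ) < n
    · rw [tau_val_pos h] at hv; omega
    · rw [tau_val_neg h] at hv; omega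
  · intro I _; exact Finset.mem_univ _
  · intro I _; exact tau_tau I

lemma uu_sum (y : Fin (2*n+1) → ℝ) :
    ∑ I : Fin (2*n), (cv (2*n+1) (I:ℕ) y)^2 = uu n y := rfl

lemma sumF_sq (y : Fin (2*n+1) → ℝ) :
    ∑ I : Fin (2*n), (Fh n I y)^2 = 16 * uu n y * PP n y := by
  have e : ∀ I : Fin (2*n), (Fh n I y)^2 =
      16*(uu n y)^2 * (cv (2*n+1) (I:ℕ) y)^2
      + 64*(uu n y)*(zz n y)*(cv (2*n+1) (I:ℕ) y * sg n (I:ℕ) y)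
      + 64*(zz n y)^2*(sg n (I:ℕ) y)^2 := fun I => by unfold Fh; ring
  rw [Finset.sum_congr rfl (fun I _ => e I)]
  rw [Finset.sum_add_distrib, Finset.sum_add_distrib, ← Finset.mul_sum, ← Finset.mul_sum,
    ← Finset.mul_sum]
  rw [sum_sg_sq, sum_cv_sg, uu_sum]
  unfold PP; ring

lemma uu_nonneg (y : Fin (2*n+1) → ℝ) : 0 ≤ uu n y :=
  Finset.sum_nonneg fun _ _ => sq_nonneg _

lemma PP_nonneg (y : Fin (2*n+1) → ℝ) : 0 ≤ PP n y := by unfold PP; positivity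

lemma nb_eq (c : ℝ) (y : Fin (2*n+1) → ℝ) :
    nb n (fun w => PP n w - c) y = 4 * Real.sqrt (uu n y) * Real.sqrt (PP n y) := by
  unfold nb
  rw [Finset.sum_congr rfl (fun I _ => by rw [vApp_phi c I y]), sumF_sq]
  rw [show (16:ℝ) * uu n y * PP n y = (4 * Real.sqrt (uu n y) * Real.sqrt (PP n y))^2 by
    rw [mul_pow, mul_pow, Real.sq_sqrt (uu_nonneg y), Real.sq_sqrt (PP_nonneg y)]; ring]
  exact Real.sqrt_sq (by positivity)



set_option maxHeartbeats 1000000 in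
theorem main (n : ℕ) (hn : 1 ≤ n) (c : ℝ) (hc : 0 < c) :
    ∀ x : Fin (2 * n + 1) → ℝ, rad n x ≠ 0 →
      nb n (fun y => (∑ I : Fin (2 * n), (cv (2 * n + 1) (I : ℕ) y) ^ 2) ^ 2
          + 4 * (cv (2 * n + 1) (2 * n) y) ^ 2 - c) x
        = 4 * rad n x * (rho n x) ^ 2 ∧
      Hcyl n (fun y => (∑ I : Fin (2 * n), (cv (2 * n + 1) (I : ℕ) y) ^ 2) ^ 2
          + 4 * (cv (2 * n + 1) (2 * n) y) ^ 2 - c) x = 0 := by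
  intro x hr
  have hφeq : (fun y => (∑ I : Fin (2 * n), (cv (2 * n + 1) (I : ℕ) y) ^ 2) ^ 2
      + 4 * (cv (2 * n + 1) (2 * n) y) ^ 2 - c) = (fun w => PP n w - c) := rfl
  rw [hφeq]
  have hradeq : rad n x = Real.sqrt (uu n x) := rfl
  have hu : 0 < uu n x := Real.sqrt_ne_zero'.mp hr
  have hP : 0 < PP n x := by
    have h1 : 0 < (uu n x)^2 := pow_pos hu 2
    have h2 : 0 ≤ (zz n x)^2 := sq_nonneg _
    unfold PP; nlinarith
  have hs : (0:ℝ) < Real.sqrt (uu n x) := Real.sqrt_pos.mpr hu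
  have hq : (0:ℝ) < Real.sqrt (PP n x) := Real.sqrt_pos.mpr hP
  have hrho_def : rho n x = (PP n x) ^ ((1:ℝ)/4) := rfl
  have ht : 0 < rho n x := by rw [hrho_def]; exact Real.rpow_pos_of_pos hP _
  have hrho2 : (rho n x)^2 = Real.sqrt (PP n x) := by
    rw [hrho_def, ← Real.rpow_natCast ((PP n x) ^ ((1:ℝ)/4)) 2, ← Real.rpow_mul hP.le,
      Real.sqrt_eq_rpow]
    norm_num
  have hPe : PP n x ^ ((1:ℝ)/4 - 1) = ((rho n x)^3)⁻¹ := by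
    rw [hrho_def, ← Real.rpow_natCast ((PP n x) ^ ((1:ℝ)/4)) 3, ← Real.rpow_mul hP.le,
      ← Real.rpow_neg hP.le]
    norm_num
  constructor
  · rw [nb_eq, hrho2, hradeq]
  -- abbreviations
  set s := Real.sqrt (uu n x) with hs_def
  set q := Real.sqrt (PP n x) with hq_def
  set t := rho n x with ht_def
  set u := uu n x with hu_def
  set z := zz n x with hz_def
  have hs2 : s^2 = u := Real.sq_sqrt hu.le
  have hq2 : q^2 = PP n x := Real.sq_sqrt hP.le
  have hPuz : PP n x = u^2 + 4*z^2 := rfl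
  have ht2 : t^2 = q := hrho2
  -- first sum : per-I formula
  have key1 : ∀ I : Fin (2*n),
      vApp (hV n (I:ℕ)) (fun y => vApp (hV n (I:ℕ)) (fun w => PP n w - c) y
        / nb n (fun w => PP n w - c) y) x
      = u/(s*q)
        + (2/(s*q) - u/(s^3*q) - 2*u^2/(s*q^3)) * (cv (2*n+1) (I:ℕ) x)^2
        + (2/(s*q) - 8*z^2/(s*q^3)) * (sg n (I:ℕ) x)^2
        + (-2*z/(s^3*q) - 8*u*z/(s*q^3)) * (cv (2*n+1) (I:ℕ) x * sg n (I:ℕ) x) := by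
    intro I
    have hIlt : (I:ℕ) < 2*n+1 := Nat.lt_succ_of_lt I.isLt
    have h2n : 2*n < 2*n+1 := by omega
    have gfun : (fun y => vApp (hV n (I:ℕ)) (fun w => PP n w - c) y
        / nb n (fun w => PP n w - c) y)
        = (fun y => Fh n I y * (4 * Real.sqrt (uu n y) * Real.sqrt (PP n y))⁻¹) := by
      funext y
      rw [vApp_phi, nb_eq, div_eq_mul_inv]
    rw [gfun]
    have hF : HasFDerivAt (Fh n I) _ x :=
      (((hasFDerivAt_uu x).const_mul 4).mul (hasFDerivAt_cv hIlt x)).add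
        (((hasFDerivAt_cv h2n x).const_mul 8).mul (hasFDerivAt_sg (I:ℕ) I.isLt x))
    have hsu := (Real.hasDerivAt_sqrt hu.ne').comp_hasFDerivAt x (hasFDerivAt_uu x)
    have hsp := (Real.hasDerivAt_sqrt hP.ne').comp_hasFDerivAt x (hasFDerivAt_PP x)
    have hnbf := (hsu.const_mul (4:ℝ)).mul hsp
    have hnbx : (0:ℝ) < 4 * Real.sqrt (uu n x) * Real.sqrt (PP n x) := by positivity
    have hinv := (hasDerivAt_inv hnbx.ne').comp_hasFDerivAt x hnbf
    have hg : HasFDerivAt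
        (fun y => Fh n I y * (4 * Real.sqrt (uu n y) * Real.sqrt (PP n y))⁻¹) _ x :=
      hF.mul hinv
    unfold vApp
    rw [hg.fderiv]
    simp only [ContinuousLinearMap.add_apply, ContinuousLinearMap.smul_apply,
      ContinuousLinearMap.neg_apply, smul_eq_mul, Function.comp_apply,
      Lu_hV, prz_hV, prI_hV, Lsg_hV, LP_hV]
    rw [show (4:ℝ) * uu n x * cv (2*n+1) (I:ℕ) x + 8 * zz n x * sg n (I:ℕ) x = Fh n I x from rfl]
    unfold Fh
    rw [← hs_def, ← hq_def, ← hu_def, ← hz_def]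
    field_simp
    ring
  -- second sum : per-I formula
  have key2 : ∀ I : Fin (2*n),
      (vApp (hV n (I:ℕ)) (fun w => PP n w - c) x / nb n (fun w => PP n w - c) x)
        * vApp (hV n (I:ℕ)) (rho n) x
      = ((1/(4*s*q)) * (1/4 * (t^3)⁻¹)) * (Fh n I x)^2 := by
    intro I
    have hdr : HasFDerivAt (rho n) _ x :=
      (Real.hasDerivAt_rpow_const (x := PP n x) (p := (1:ℝ)/4)
        (Or.inl hP.ne')).comp_hasFDerivAt x (hasFDerivAt_PP x)
    have hval : vApp (hV n (I:ℕ)) (rho n) x = (1/4 * (t^3)⁻¹) * Fh n I x := by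
      unfold vApp
      rw [hdr.fderiv]
      simp only [ContinuousLinearMap.smul_apply, smul_eq_mul, LP_hV]
      rw [hPe]
      rw [show (4:ℝ) * uu n x * cv (2*n+1) (I:ℕ) x + 8 * zz n x * sg n (I:ℕ) x = Fh n I x from rfl]
    rw [hval, vApp_phi, nb_eq, ← hs_def, ← hq_def]
    ring
  -- assemble
  unfold Hcyl
  rw [Finset.sum_congr rfl (fun I _ => key1 I), Finset.sum_congr rfl (fun I _ => key2 I)]
  rw [Finset.sum_add_distrib, Finset.sum_add_distrib, Finset.sum_add_distrib,
    Finset.sum_const, ← Finset.mul_sum, ← Finset.mul_sum, ← Finset.mul_sum, ← Finset.mul_sum]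
  rw [uu_sum, sum_sg_sq, sum_cv_sg, sumF_sq]
  simp only [Finset.card_univ, Fintype.card_fin, nsmul_eq_mul, mul_zero]
  rw [← hu_def, ← ht_def]
  -- now pure algebra
  have hs0 : s ≠ 0 := hs.ne'
  have hq0 : q ≠ 0 := hq.ne'
  have ht0 : t ≠ 0 := ht.ne'
  rw [hPuz] at hq2
  rw [hPuz]
  push_cast
  rw [← hs2, ← ht2]
  rw [← hs2, ← ht2] at hq2
  have h4 : t^4 = s^4 + 4*z^2 := by linear_combination hq2
  field_simp
  linear_combination (16 * (3 + 2*(n:ℝ)) * s) * h4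

end HSM

/-- Proposition 6.1(b): for `φ = ρ⁴ − c` one has
`|∇_bφ| = 4rρ²` and `H_φ = 0` wherever `r ≠ 0`; i.e. the Heisenberg spheres
`{ρ⁴ = c}` are horizontally (p-)minimal hypersurfaces of the Heisenberg
cylinder. -/
theorem heisenberg_spheres_are_minimal
    (n : ℕ) (hn : 1 ≤ n) (c : ℝ) (hc : 0 < c) :
    ∀ x : Fin (2 * n + 1) → ℝ, rad n x ≠ 0 →
      nb n (fun y => (∑ I : Fin (2 * n), (cv (2 * n + 1) (I : ℕ) y) ^ 2) ^ 2
          + 4 * (cv (2 * n + 1) (2 * n) y) ^ 2 - c) x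
        = 4 * rad n x * (rho n x) ^ 2 ∧
      Hcyl n (fun y => (∑ I : Fin (2 * n), (cv (2 * n + 1) (I : ℕ) y) ^ 2) ^ 2
          + 4 * (cv (2 * n + 1) (2 * n) y) ^ 2 - c) x = 0 :=
  HSM.main n hn c hc
end
end
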